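/- arXiv:1705.10826 — 8 statements merged into one kernel-verified Lean document; each statement's English description precedes it below -/
import Mathlib

section
/- For every edge-weighted cycle C on n ≥ 3 vertices v_0, …, v_{n−1} with homebase v_0 and invoking cost q ≥ 0, the minimum cost of an exploration strategy equals min_{0 ≤ i ≤ n−1} c_i, where c_i = q + w(C∖e_i) if the edge e_i is incident to v_0, and otherwise c_i = min{ 2q + w(C∖e_i), q + d_{C∖e_i}(v_0, v_i^{min}) + w(C∖e_i) }, where v_i^{min} denotes the endpoint of e_i that is nearer to v_0 in the path C∖e_i. -/
open SimpleGraph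

/-- An exploration strategy on a graph `G` from homebase `h`: a nonempty finite
family of walks, each starting at `h`, that together visit every vertex. -/
structure ExplStrategy {V : Type*} (G : SimpleGraph V) (h : V) where
  k : ℕ
  kpos : 0 < k
  ends : Fin k → V
  walks : (i : Fin k) → G.Walk h (ends i)
  covers : ∀ v : V, ∃ i, v ∈ (walks i).support

/-- The weight of a walk: the sum of the weights of its edges, with multiplicity. -/
def walkWeight {V : Type*} {G : SimpleGraph V} (w : Sym2 V → ℝ) {a b : V}
    (p : G.Walk a b) : ℝ := (p.edges.map w).sum

/-- Cost of a strategy: `k·q` plus the total distance traversed. -/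
noncomputable def stratCost {V : Type*} {G : SimpleGraph V} {h : V}
    (w : Sym2 V → ℝ) (q : ℝ) (S : ExplStrategy G h) : ℝ :=
  (S.k : ℝ) * q + ∑ i, walkWeight w (S.walks i)

/-- Weighted distance between two vertices: infimum of weights of connecting walks. -/
noncomputable def wdist {V : Type*} (G : SimpleGraph V) (w : Sym2 V → ℝ) (u x : V) : ℝ :=
  sInf {c : ℝ | ∃ p : G.Walk u x, walkWeight w p = c}

/-- The ring (cycle graph) on `Fin n`, with edges `e i = s(i, i+1)`. -/
def ringGraph (n : ℕ) [NeZero n] : SimpleGraph (Fin n) :=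
  SimpleGraph.fromRel (fun a b => b = a + 1)

/-- The cost `c_i` associated to omitting the edge `e_i = s(i, i+1)` of the ring:
`q + w(C∖e_i)` if `e_i` is incident to the homebase `v_0`, and otherwise
`min (2q + w(C∖e_i)) (q + d_{C∖e_i}(v_0, v_i^min) + w(C∖e_i))`, where
`d_{C∖e_i}(v_0, v_i^min)` is the distance from `v_0` to the nearer endpoint of `e_i`
in the path `C∖e_i`. -/
noncomputable def ringCost (n : ℕ) [NeZero n] (w : Sym2 (Fin n) → ℝ) (q : ℝ)
    (i : Fin n) : ℝ :=
  let wCi : ℝ := (∑ j : Fin n, w s(j, j + 1)) - w s(i, i + 1)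
  let Ci : SimpleGraph (Fin n) := (ringGraph n).deleteEdges {s(i, i + 1)}
  if i = 0 ∨ i + 1 = 0 then q + wCi
  else min (2 * q + wCi)
    (q + min (wdist Ci w 0 i) (wdist Ci w 0 (i + 1)) + wCi)

namespace RingPf
variable {n : ℕ} [NeZero n]
open Fin.NatCast Fin.CommRing

lemma two_ne_zero' (hn : 3 ≤ n) : (2 : Fin n) ≠ 0 := by
  have : ((2:ℕ) : Fin n) ≠ 0 := by
    rw [Ne, Fin.natCast_eq_zero]
    intro hd; have := Nat.le_of_dvd (by norm_num) hd; omega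
  simpa using this

lemma fin_val_one (hn : 3 ≤ n) : (1 : Fin n).val = 1 := by
  have : ((1:ℕ) : Fin n).val = 1 % n := Fin.val_natCast 1 n
  simpa [Nat.mod_eq_of_lt (by omega : 1 < n)] using this

lemma fin_val_add_one' (hn : 3 ≤ n) (i : Fin n) : (i+1).val = (i.val + 1) % n := by
  rw [Fin.add_def, fin_val_one hn]

lemma fin_add_one_eq_zero_iff (hn : 3 ≤ n) (i : Fin n) : i + 1 = 0 ↔ i.val = n - 1 := by
  rw [Fin.ext_iff, fin_val_add_one' hn]
  have hi := i.isLt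
  rcases Nat.lt_or_ge (i.val + 1) n with hlt | hge
  · rw [Nat.mod_eq_of_lt hlt]; simp; omega
  · have : i.val + 1 = n := by omega
    rw [this, Nat.mod_self]; simp; omega

lemma fin_val_add_one (hn : 3 ≤ n) (i : Fin n) (h : i + 1 ≠ 0) : (i+1).val = i.val + 1 := by
  rw [fin_val_add_one' hn]
  have := i.isLt
  have : i.val ≠ n - 1 := fun hh => h ((fin_add_one_eq_zero_iff hn i).2 hh)
  rw [Nat.mod_eq_of_lt (by omega)]

/-- position of `v` along the path obtained by deleting edge `s(i,i+1)`:
`i+1` has position 0, ..., `i` has position `n-1`. -/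
def rho (i v : Fin n) : ℕ := (v - (i+1)).val

lemma rho_eq (i v : Fin n) :
    rho i v = if (i+1).val ≤ v.val then v.val - (i+1).val else v.val + n - (i+1).val := by
  have hb := (i+1).isLt
  have hv := v.isLt
  unfold rho
  rw [Fin.sub_def]
  show (n - (i+1).val + v.val) % n = _
  generalize hB : (i+1).val = b at hb ⊢
  rcases Nat.lt_or_ge v.val b with hlt | hge
  · rw [if_neg (by omega), Nat.mod_eq_of_lt (by omega)]; omega
  · rw [if_pos hge]
    have h1 : n - b + v.val = (v.val - b) + n := by omega
    have h2 : (v.val - b) % n = v.val - b := Nat.mod_eq_of_lt (by omega)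
    rw [h1, Nat.add_mod_right, h2]

lemma rho_lt (i v : Fin n) : rho i v < n := (v - (i+1)).isLt

lemma rho_inj (i : Fin n) {a b : Fin n} (h : rho i a = rho i b) : a = b := by
  have h2 : a - (i+1) = b - (i+1) := Fin.ext h
  have h3 := congrArg (· + (i+1)) h2
  simpa using h3

lemma rho_self (hn : 3 ≤ n) (i : Fin n) : rho i i = n - 1 := by
  rw [rho_eq]
  have hi := i.isLt
  by_cases h0 : i + 1 = 0
  · have h1 : (i+1).val = 0 := by rw [h0]; rfl
    have h2 : i.val = n - 1 := (fin_add_one_eq_zero_iff hn i).1 h0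
    rw [h1, if_pos (by omega)]; omega
  · have h1 := fin_val_add_one hn i h0
    rw [h1, if_neg (by omega)]; omega

lemma rho_succ_self (i : Fin n) : rho i (i+1) = 0 := by
  unfold rho; simp

lemma rho_step (hn : 3 ≤ n) (i a : Fin n) (h : a ≠ i) : rho i (a+1) = rho i a + 1 := by
  unfold rho
  have h2 : a + 1 - (i+1) = (a - (i+1)) + 1 := by ring
  rw [h2]
  apply fin_val_add_one hn
  intro h0
  apply h
  have h3 : a - (i+1) = -1 := by
    have h4 := congrArg (· - 1) h0
    simpa using h4
  have h5 := congrArg (· + (i+1)) h3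
  rw [sub_add_cancel] at h5
  rw [h5]; ring

lemma rho_zero (hn : 3 ≤ n) (i : Fin n) : rho i 0 = n - 1 - i.val := by
  rw [rho_eq]
  simp only [Fin.val_zero]
  have hi := i.isLt
  by_cases h0 : i + 1 = 0
  · have h1 : (i+1).val = 0 := by rw [h0]; rfl
    have h2 : i.val = n - 1 := (fin_add_one_eq_zero_iff hn i).1 h0
    rw [h1]; simp; omega
  · have h1 := fin_val_add_one hn i h0
    rw [h1]; simp; omega

lemma rho_val_lt (hn : 3 ≤ n) (i j : Fin n) (h : j.val < i.val) :
    rho i j = n - 1 - i.val + j.val := by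
  rw [rho_eq]
  have hi := i.isLt
  by_cases h0 : i + 1 = 0
  · have h1 : (i+1).val = 0 := by rw [h0]; rfl
    have h2 : i.val = n - 1 := (fin_add_one_eq_zero_iff hn i).1 h0
    rw [h1, if_pos (by omega)]; omega
  · have h1 := fin_val_add_one hn i h0
    rw [h1, if_neg (by omega)]; omega

lemma rho_val_gt (hn : 3 ≤ n) (i j : Fin n) (h : i.val < j.val) :
    rho i j = j.val - i.val - 1 := by
  rw [rho_eq]
  have hi := i.isLt
  have hj := j.isLt
  have h0 : i + 1 ≠ 0 := fun hh => by
    have := (fin_add_one_eq_zero_iff hn i).1 hh; omega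
  have h1 := fin_val_add_one hn i h0
  rw [h1, if_pos (by omega)]; omega

lemma one_ne_zero' (hn : 3 ≤ n) : (1 : Fin n) ≠ 0 := by
  intro h
  have := congrArg Fin.val h
  rw [fin_val_one hn] at this
  simp at this

lemma ring_adj_succ (hn : 3 ≤ n) (a : Fin n) : (ringGraph n).Adj a (a+1) := by
  rw [ringGraph, fromRel_adj]
  refine ⟨?_, Or.inl rfl⟩
  intro h
  have h2 : (1 : Fin n) = 0 := by
    have := congrArg (· - a) h
    simpa using this.symm
  exact one_ne_zero' hn h2

lemma e_inj (hn : 3 ≤ n) {a b : Fin n} (h : s(a, a+1) = s(b, b+1)) : a = b := by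
  rw [Sym2.eq_iff] at h
  rcases h with ⟨h1, _⟩ | ⟨h1, h2⟩
  · exact h1
  · exfalso
    have h3 : a = a + 2 := by
      calc a = b + 1 := h1
      _ = (a + 1) + 1 := by rw [h2]
      _ = a + 2 := by ring
    exact two_ne_zero' hn (left_eq_add.mp h3)

lemma edge_form (hn : 3 ≤ n) {e : Sym2 (Fin n)} (he : e ∈ (ringGraph n).edgeSet) :
    ∃ j : Fin n, e = s(j, j+1) := by
  induction e with
  | _ a b =>
    rw [mem_edgeSet, ringGraph, fromRel_adj] at he
    rcases he with ⟨hne, h | h⟩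
    · exact ⟨a, by rw [h]⟩
    · exact ⟨b, by rw [h, Sym2.eq_swap]⟩

/-- The path graph obtained by deleting edge `s(i,i+1)` from the ring. -/
abbrev CiG (n : ℕ) [NeZero n] (i : Fin n) : SimpleGraph (Fin n) :=
  (ringGraph n).deleteEdges {s(i, i + 1)}

lemma Ci_adj {i a b : Fin n} :
    (CiG n i).Adj a b ↔ (ringGraph n).Adj a b ∧ s(a, b) ≠ s(i, i + 1) := by
  rw [deleteEdges_adj, Set.mem_singleton_iff]

lemma Ci_adj_succ (hn : 3 ≤ n) (i a : Fin n) (h : a ≠ i) : (CiG n i).Adj a (a+1) :=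
  Ci_adj.mpr ⟨ring_adj_succ hn a, fun he => h (e_inj hn he)⟩

lemma cross (hn : 3 ≤ n) (i j : Fin n) {u v : Fin n} (p : (CiG n i).Walk u v) :
    s(j, j+1) ∉ p.edges → rho i u ≤ rho i j → rho i v ≤ rho i j := by
  induction p with
  | nil => exact fun _ hu => hu
  | cons hadj ptail ih =>
    intro hne hu
    rename_i a c d
    rw [SimpleGraph.Walk.edges_cons, List.mem_cons] at hne
    push_neg at hne
    obtain ⟨hne1, hne2⟩ := hne
    rw [Ci_adj] at hadj
    obtain ⟨hradj, hdel⟩ := hadj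
    rw [ringGraph, fromRel_adj] at hradj
    obtain ⟨hac, hcase⟩ := hradj
    apply ih hne2
    rcases hcase with hc | hc
    · -- c = a + 1
      subst hc
      have hai : a ≠ i := by
        intro hh; subst hh; exact hdel rfl
      rw [rho_step hn i a hai]
      rcases Nat.lt_or_ge (rho i a) (rho i j) with hlt | hge
      · omega
      · have heq : rho i a = rho i j := le_antisymm hu hge
        have haj : a = j := rho_inj i heq
        subst haj
        exact absurd rfl hne1
    · -- a = c + 1
      subst hc
      have hci : c ≠ i := by
        intro hh; subst hh
        exact hdel (Sym2.eq_swap)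
      rw [rho_step hn i c hci] at hu
      omega

lemma must_cross (hn : 3 ≤ n) (i j : Fin n) {u v : Fin n} (p : (CiG n i).Walk u v)
    (hu : rho i u ≤ rho i j) (hv : rho i j < rho i v) : s(j, j+1) ∈ p.edges := by
  by_contra hne
  exact absurd (cross hn i j p hne hu) (by omega)

lemma sep_mem_edges (hn : 3 ≤ n) (i j : Fin n) {u v : Fin n} (p : (CiG n i).Walk u v)
    (h : (rho i u ≤ rho i j ∧ rho i j < rho i v) ∨ (rho i v ≤ rho i j ∧ rho i j < rho i u)) :
    s(j, j+1) ∈ p.edges := by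
  rcases h with ⟨h1, h2⟩ | ⟨h1, h2⟩
  · exact must_cross hn i j p h1 h2
  · have hh := must_cross hn i j p.reverse h1 h2
    rw [SimpleGraph.Walk.edges_reverse, List.mem_reverse] at hh
    exact hh

lemma sep_mem_edges_support (hn : 3 ≤ n) (i j : Fin n) {u v : Fin n}
    (p : (CiG n i).Walk u v) {x : Fin n} (hx : x ∈ p.support)
    (h : (rho i u ≤ rho i j ∧ rho i j < rho i x) ∨ (rho i x ≤ rho i j ∧ rho i j < rho i u)) :
    s(j, j+1) ∈ p.edges :=
  SimpleGraph.Walk.edges_takeUntil_subset p hx (sep_mem_edges hn i j (p.takeUntil x hx) h)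

variable {w : Sym2 (Fin n) → ℝ}

lemma walkWeight_append {G : SimpleGraph (Fin n)} {a b c : Fin n} (p : G.Walk a b)
    (p' : G.Walk b c) : walkWeight w (p.append p') = walkWeight w p + walkWeight w p' := by
  unfold walkWeight
  rw [SimpleGraph.Walk.edges_append, List.map_append, List.sum_append]

lemma walkWeight_reverse {G : SimpleGraph (Fin n)} {a b : Fin n} (p : G.Walk a b) :
    walkWeight w p.reverse = walkWeight w p := by
  unfold walkWeight
  rw [SimpleGraph.Walk.edges_reverse, List.map_reverse, List.sum_reverse]

lemma walkWeight_copy {G : SimpleGraph (Fin n)} {a b a' b' : Fin n} (p : G.Walk a b)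
    (ha : a = a') (hb : b = b') : walkWeight w (p.copy ha hb) = walkWeight w p := by
  unfold walkWeight
  rw [SimpleGraph.Walk.edges_copy]

lemma walkWeight_transfer {G H : SimpleGraph (Fin n)} {a b : Fin n} (p : G.Walk a b)
    (hp : ∀ e ∈ p.edges, e ∈ H.edgeSet) :
    walkWeight w (p.transfer H hp) = walkWeight w p := by
  unfold walkWeight
  rw [SimpleGraph.Walk.edges_transfer]

lemma ring_edge_nonneg (hn : 3 ≤ n) (hw : ∀ i : Fin n, 0 < w s(i, i + 1)) :
    ∀ e ∈ (ringGraph n).edgeSet, 0 ≤ w e := by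
  intro e he
  obtain ⟨j, rfl⟩ := edge_form hn he
  exact (hw j).le

lemma Ci_edgeSet_subset (i : Fin n) :
    (CiG n i).edgeSet ⊆ (ringGraph n).edgeSet :=
  SimpleGraph.edgeSet_mono (SimpleGraph.deleteEdges_le _)

lemma walkWeight_nonneg_ring (hn : 3 ≤ n) (hw : ∀ i : Fin n, 0 < w s(i, i + 1))
    {a b : Fin n} (p : (ringGraph n).Walk a b) : 0 ≤ walkWeight w p := by
  apply List.sum_nonneg
  intro x hx
  rw [List.mem_map] at hx
  obtain ⟨e, he, rfl⟩ := hx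
  exact ring_edge_nonneg hn hw e (p.edges_subset_edgeSet he)

lemma walkWeight_nonneg_Ci (hn : 3 ≤ n) (hw : ∀ i : Fin n, 0 < w s(i, i + 1))
    {i a b : Fin n} (p : (CiG n i).Walk a b) : 0 ≤ walkWeight w p := by
  apply List.sum_nonneg
  intro x hx
  rw [List.mem_map] at hx
  obtain ⟨e, he, rfl⟩ := hx
  exact ring_edge_nonneg hn hw e (Ci_edgeSet_subset i (p.edges_subset_edgeSet he))

lemma list_toFinset_sum_le (w : Sym2 (Fin n) → ℝ) (l : List (Sym2 (Fin n)))
    (h0 : ∀ x ∈ l, 0 ≤ w x) : ∑ x ∈ l.toFinset, w x ≤ (l.map w).sum := by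
  induction l with
  | nil => simp
  | cons a l ih =>
    rw [List.toFinset_cons, List.map_cons, List.sum_cons]
    have h0' : ∀ x ∈ l, 0 ≤ w x := fun x hx => h0 x (List.mem_cons_of_mem a hx)
    by_cases ha : a ∈ l.toFinset
    · rw [Finset.insert_eq_self.mpr ha]
      have := ih h0'
      have hwa : 0 ≤ w a := h0 a (List.mem_cons_self)
      linarith
    · rw [Finset.sum_insert ha]
      have := ih h0'
      linarith

lemma sum_edges_le (hn : 3 ≤ n) (w : Sym2 (Fin n) → ℝ) (l : List (Sym2 (Fin n)))
    (s : Finset (Fin n)) (hmem : ∀ j ∈ s, s(j, j+1) ∈ l) (h0 : ∀ x ∈ l, 0 ≤ w x) :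
    ∑ j ∈ s, w s(j, j+1) ≤ (l.map w).sum := by
  have hinj : Set.InjOn (fun j : Fin n => s(j, j+1)) s := fun a _ b _ h => e_inj hn h
  rw [← Finset.sum_image hinj]
  refine le_trans (Finset.sum_le_sum_of_subset_of_nonneg ?_ ?_) (list_toFinset_sum_le w l h0)
  · intro x hx
    rw [Finset.mem_image] at hx
    obtain ⟨j, hj, rfl⟩ := hx
    rw [List.mem_toFinset]
    exact hmem j hj
  · intro x hx _
    exact h0 x (List.mem_toFinset.mp hx)

lemma walk_weight_lb (hn : 3 ≤ n) (hw : ∀ i : Fin n, 0 < w s(i, i + 1))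
    {i u v : Fin n} (p : (CiG n i).Walk u v) (s : Finset (Fin n))
    (hmem : ∀ j ∈ s, s(j, j+1) ∈ p.edges) :
    ∑ j ∈ s, w s(j, j+1) ≤ walkWeight w p := by
  apply sum_edges_le hn w p.edges s hmem
  intro x hx
  exact ring_edge_nonneg hn hw x (Ci_edgeSet_subset i (p.edges_subset_edgeSet hx))

lemma walkWeight_cons {G : SimpleGraph (Fin n)} {a b c : Fin n} (h : G.Adj a b)
    (p : G.Walk b c) : walkWeight w (SimpleGraph.Walk.cons h p) = w s(a, b) + walkWeight w p := by
  unfold walkWeight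
  rw [SimpleGraph.Walk.edges_cons, List.map_cons, List.sum_cons]

/-- Walk going forward `m` steps from `a` in the path `CiG n i`. -/
def walkFwd (hn : 3 ≤ n) (i : Fin n) : (a : Fin n) → (m : ℕ) →
    (∀ t : ℕ, t < m → a + (t : Fin n) ≠ i) → (CiG n i).Walk a (a + (m : Fin n))
  | a, 0, _ => SimpleGraph.Walk.nil.copy rfl (by simp)
  | a, (m+1), h =>
    (SimpleGraph.Walk.cons (Ci_adj_succ hn i a (by simpa using h 0 (Nat.succ_pos m)))
      ((walkFwd hn i (a+1) m (fun t ht => by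
        intro hc
        apply h (t+1) (by omega)
        rw [← hc]; push_cast; ring)).copy rfl (by push_cast; ring)))

lemma walkFwd_weight (hn : 3 ≤ n) (i : Fin n) (m : ℕ) :
    ∀ (a : Fin n) (h : ∀ t : ℕ, t < m → a + (t : Fin n) ≠ i),
    walkWeight w (walkFwd hn i a m h) =
      ∑ t ∈ Finset.range m, w s(a + (t : Fin n), a + (t : Fin n) + 1) := by
  induction m with
  | zero => intro a h; simp [walkFwd, walkWeight_copy, walkWeight]
  | succ m ih =>
    intro a h
    rw [walkFwd, walkWeight_cons, walkWeight_copy, ih]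
    rw [Finset.sum_range_succ']
    have hterm : ∀ t : ℕ, a + 1 + (t : Fin n) = a + ((t+1 : ℕ) : Fin n) := by
      intro t; push_cast; ring
    have : ∑ t ∈ Finset.range m, w s(a + 1 + (t : Fin n), a + 1 + (t : Fin n) + 1)
        = ∑ t ∈ Finset.range m, w s(a + ((t+1 : ℕ) : Fin n), a + ((t+1:ℕ) : Fin n) + 1) := by
      apply Finset.sum_congr rfl
      intro t _
      rw [hterm t]
    rw [this]
    simp
    ring

lemma walkFwd_support (hn : 3 ≤ n) (i : Fin n) (m : ℕ) :
    ∀ (a : Fin n) (h : ∀ t : ℕ, t < m → a + (t : Fin n) ≠ i) (t : ℕ), t ≤ m →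
    a + (t : Fin n) ∈ (walkFwd hn i a m h).support := by
  induction m with
  | zero =>
    intro a h t ht
    interval_cases t
    simp [walkFwd]
  | succ m ih =>
    intro a h t ht
    rw [walkFwd, SimpleGraph.Walk.support_cons, List.mem_cons]
    rcases Nat.eq_zero_or_pos t with rfl | hpos
    · left; simp
    · right
      rw [SimpleGraph.Walk.support_copy]
      have ht' : a + (t : Fin n) = (a + 1) + ((t - 1 : ℕ) : Fin n) := by
        have : t - 1 + 1 = t := by omega
        conv_lhs => rw [← this]
        push_cast; ring
      rw [ht']
      exact ih (a+1) _ (t-1) (by omega)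

/-- Sum of edge weights `e_0, ..., e_{i-1}` (the segment from `0` to `i`). -/
def Dsum (w : Sym2 (Fin n) → ℝ) (i : Fin n) : ℝ :=
  ∑ t ∈ Finset.range i.val, w s((t : Fin n), (t : Fin n) + 1)

/-- Sum of edge weights `e_{i+1}, ..., e_{n-1}` (the segment from `i+1` back to `0`). -/
def Esum (w : Sym2 (Fin n) → ℝ) (i : Fin n) : ℝ :=
  ∑ t ∈ Finset.range (n - 1 - i.val), w s(i + 1 + (t : Fin n), i + 1 + (t : Fin n) + 1)

lemma val_shift (hn : 3 ≤ n) (i : Fin n) (hne : i + 1 ≠ 0) (t : ℕ) (ht : t < n - 1 - i.val) :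
    (i + 1 + (t : Fin n)).val = i.val + 1 + t := by
  rw [Fin.add_def, fin_val_add_one hn i hne, Fin.val_natCast]
  have hi := i.isLt
  show (i.val + 1 + t % n) % n = i.val + 1 + t
  rw [Nat.mod_eq_of_lt (show t < n by omega)]
  exact Nat.mod_eq_of_lt (by omega)

lemma total_eq (hn : 3 ≤ n) (i : Fin n) :
    ∑ j : Fin n, w s(j, j + 1) = Dsum w i + w s(i, i + 1) + Esum w i := by
  have hi := i.isLt
  set f : ℕ → ℝ := fun t => w s((t : Fin n), (t : Fin n) + 1) with hf
  have h1 : ∑ j : Fin n, w s(j, j + 1) = ∑ t ∈ Finset.range n, f t := by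
    rw [← Fin.sum_univ_eq_sum_range f n]
    apply Finset.sum_congr rfl
    intro j _
    simp [hf, Fin.cast_val_eq_self]
  rw [h1, Finset.range_eq_Ico,
    ← Finset.sum_Ico_consecutive f (Nat.zero_le (i.val+1)) (by omega : i.val + 1 ≤ n),
    ← Finset.range_eq_Ico, Finset.sum_range_succ, Finset.sum_Ico_eq_sum_range]
  have h2 : f i.val = w s(i, i + 1) := by simp [hf, Fin.cast_val_eq_self]
  have h3 : ∀ t, f (i.val + 1 + t) = w s(i + 1 + (t : Fin n), i + 1 + (t : Fin n) + 1) := by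
    intro t
    simp only [hf]
    congr 2 <;> push_cast <;> ring_nf
  have h4 : n - (i.val + 1) = n - 1 - i.val := by omega
  have h5 : ∑ k ∈ Finset.range (n - 1 - i.val), f (i.val + 1 + k) = Esum w i := by
    unfold Esum
    exact Finset.sum_congr rfl fun t _ => h3 t
  rw [h2, h4, h5]
  rfl

lemma Dsum_eq_filter (hn : 3 ≤ n) (i : Fin n) :
    Dsum w i = ∑ j ∈ Finset.univ.filter (fun j : Fin n => j.val < i.val), w s(j, j+1) := by
  unfold Dsum
  have hi := i.isLt
  refine Finset.sum_nbij' (fun t => (t : Fin n)) (fun j => j.val) ?_ ?_ ?_ ?_ ?_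
  · intro t ht
    rw [Finset.mem_range] at ht
    simp only [Finset.mem_filter, Finset.mem_univ, true_and]
    rw [Fin.val_natCast, Nat.mod_eq_of_lt (by omega)]
    omega
  · intro j hj
    rw [Finset.mem_filter] at hj
    rw [Finset.mem_range]
    exact hj.2
  · intro t ht
    rw [Finset.mem_range] at ht
    rw [Fin.val_natCast]
    exact Nat.mod_eq_of_lt (by omega)
  · intro j _
    exact Fin.cast_val_eq_self j
  · intro t _
    rfl

lemma Esum_eq_filter (hn : 3 ≤ n) (i : Fin n) :
    Esum w i = ∑ j ∈ Finset.univ.filter (fun j : Fin n => i.val < j.val), w s(j, j+1) := by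
  unfold Esum
  have hi := i.isLt
  by_cases h0 : i + 1 = 0
  · have h2 : i.val = n - 1 := (fin_add_one_eq_zero_iff hn i).1 h0
    have he : n - 1 - i.val = 0 := by omega
    rw [he]
    have hemp : Finset.univ.filter (fun j : Fin n => i.val < j.val) = ∅ := by
      apply Finset.filter_false_of_mem
      intro j _
      have := j.isLt
      omega
    rw [hemp]
    simp
  · refine Finset.sum_nbij' (fun t => i + 1 + (t : Fin n)) (fun j => j.val - i.val - 1)
      ?_ ?_ ?_ ?_ ?_
    · intro t ht
      rw [Finset.mem_range] at ht
      simp only [Finset.mem_filter, Finset.mem_univ, true_and]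
      rw [val_shift hn i h0 t ht]
      omega
    · intro j hj
      rw [Finset.mem_filter] at hj
      have hj2 := hj.2
      have := j.isLt
      rw [Finset.mem_range]
      omega
    · intro t ht
      rw [Finset.mem_range] at ht
      rw [val_shift hn i h0 t ht]
      omega
    · intro j hj
      rw [Finset.mem_filter] at hj
      have hj2 := hj.2
      have hjl := j.isLt
      apply Fin.ext
      rw [val_shift hn i h0 _ (by omega)]
      omega
    · intro t _
      rfl

lemma pUp_h (hn : 3 ≤ n) (i : Fin n) : ∀ t : ℕ, t < i.val → (0 : Fin n) + (t : Fin n) ≠ i := by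
  intro t ht hc
  have hi := i.isLt
  have : ((0 : Fin n) + (t : Fin n)).val = t := by
    rw [zero_add, Fin.val_natCast]
    exact Nat.mod_eq_of_lt (by omega)
  rw [hc] at this
  omega

/-- The walk from `0` forward (through `1, 2, ...`) to `i` in `CiG n i`. -/
def pUp (hn : 3 ≤ n) (i : Fin n) : (CiG n i).Walk 0 i :=
  (walkFwd hn i 0 i.val (pUp_h hn i)).copy rfl (by
    rw [zero_add, Fin.cast_val_eq_self])

lemma pUp_weight (hn : 3 ≤ n) (i : Fin n) : walkWeight w (pUp hn i) = Dsum w i := by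
  rw [pUp, walkWeight_copy, walkFwd_weight]
  unfold Dsum
  apply Finset.sum_congr rfl
  intro t _
  rw [zero_add]

lemma pUp_support (hn : 3 ≤ n) (i : Fin n) {v : Fin n} (hv : v.val ≤ i.val) :
    v ∈ (pUp hn i).support := by
  rw [pUp, SimpleGraph.Walk.support_copy]
  have h := walkFwd_support hn i i.val 0 (pUp_h hn i) v.val (by omega)
  have heq : (0 : Fin n) + ((v.val : ℕ) : Fin n) = v := by
    rw [zero_add, Fin.cast_val_eq_self]
  exact heq ▸ h

lemma pDn_h (hn : 3 ≤ n) (i : Fin n) :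
    ∀ t : ℕ, t < n - 1 - i.val → (i + 1) + (t : Fin n) ≠ i := by
  intro t ht hc
  by_cases h0 : i + 1 = 0
  · have h2 : i.val = n - 1 := (fin_add_one_eq_zero_iff hn i).1 h0
    omega
  · have := val_shift hn i h0 t ht
    rw [hc] at this
    omega

lemma pDn_end (hn : 3 ≤ n) (i : Fin n) :
    (i + 1) + ((n - 1 - i.val : ℕ) : Fin n) = 0 := by
  have hi := i.isLt
  apply Fin.ext
  rw [Fin.add_def, Fin.val_natCast]
  by_cases h0 : i + 1 = 0
  · have h2 : i.val = n - 1 := (fin_add_one_eq_zero_iff hn i).1 h0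
    have h3 : n - 1 - i.val = 0 := by omega
    rw [h3]
    have h4 : (i+1).val = 0 := by rw [h0]; rfl
    rw [h4]
    simp
  · rw [fin_val_add_one hn i h0]
    show (i.val + 1 + (n - 1 - i.val) % n) % n = (0 : Fin n).val
    rw [Nat.mod_eq_of_lt (show n - 1 - i.val < n by omega)]
    have h5 : i.val + 1 + (n - 1 - i.val) = n := by omega
    rw [h5, Nat.mod_self]
    simp

/-- The walk from `i+1` forward (through `i+2, ...`) to `0` in `CiG n i`. -/
def pDn (hn : 3 ≤ n) (i : Fin n) : (CiG n i).Walk (i+1) 0 :=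
  (walkFwd hn i (i+1) (n - 1 - i.val) (pDn_h hn i)).copy rfl (pDn_end hn i)

lemma pDn_weight (hn : 3 ≤ n) (i : Fin n) : walkWeight w (pDn hn i) = Esum w i := by
  rw [pDn, walkWeight_copy, walkFwd_weight]
  rfl

lemma pDn_support (hn : 3 ≤ n) (i : Fin n) {v : Fin n} (hv : v = 0 ∨ i.val < v.val) :
    v ∈ (pDn hn i).support := by
  rw [pDn, SimpleGraph.Walk.support_copy]
  rcases hv with rfl | hv
  · have h := walkFwd_support hn i (n - 1 - i.val) (i+1) (pDn_h hn i) (n - 1 - i.val) le_rfl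
    exact pDn_end hn i ▸ h
  · have hi := i.isLt
    have hvl := v.isLt
    have h0 : i + 1 ≠ 0 := by
      intro hh
      have := (fin_add_one_eq_zero_iff hn i).1 hh
      omega
    have h := walkFwd_support hn i (n - 1 - i.val) (i+1) (pDn_h hn i) (v.val - i.val - 1) (by omega)
    have heq : (i + 1) + ((v.val - i.val - 1 : ℕ) : Fin n) = v := by
      apply Fin.ext
      rw [val_shift hn i h0 _ (by omega)]
      omega
    exact heq ▸ h

lemma edges_lt_mem (hn : 3 ≤ n) (i : Fin n) {v : Fin n} (p : (CiG n i).Walk 0 v)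
    (hi : i ∈ p.support) {j : Fin n} (hj : j.val < i.val) : s(j, j+1) ∈ p.edges := by
  have hiv := i.isLt
  apply sep_mem_edges_support hn i j p hi
  left
  rw [rho_zero hn i, rho_val_lt hn i j hj, rho_self hn i]
  omega

lemma edges_gt_mem (hn : 3 ≤ n) (i : Fin n) {v : Fin n} (p : (CiG n i).Walk 0 v)
    (hi : i + 1 ∈ p.support) {j : Fin n} (hj : i.val < j.val) : s(j, j+1) ∈ p.edges := by
  have hjv := j.isLt
  apply sep_mem_edges_support hn i j p hi
  right
  rw [rho_zero hn i, rho_val_gt hn i j hj, rho_succ_self]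
  omega

lemma edges_all_mem (hn : 3 ≤ n) (i : Fin n) {a b : Fin n} (p : (CiG n i).Walk a b)
    (ha : a = i + 1 ∧ b = i ∨ a = i ∧ b = i + 1) {j : Fin n} (hj : j ≠ i) :
    s(j, j+1) ∈ p.edges := by
  have hrj : rho i j < n - 1 := by
    have h1 := rho_lt i j
    have h2 : rho i j ≠ n - 1 := by
      intro hh
      exact hj (rho_inj i (by rw [hh, rho_self hn i]))
    omega
  apply sep_mem_edges hn i j p
  rcases ha with ⟨ha1, hb1⟩ | ⟨ha1, hb1⟩
  · left; rw [ha1, hb1, rho_succ_self, rho_self hn i]; omega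
  · right; rw [ha1, hb1, rho_succ_self, rho_self hn i]; omega

lemma wdist_left (hn : 3 ≤ n) (hw : ∀ i : Fin n, 0 < w s(i, i + 1)) (i : Fin n) :
    wdist (CiG n i) w 0 i = Dsum w i := by
  apply IsLeast.csInf_eq
  constructor
  · exact ⟨pUp hn i, pUp_weight hn i⟩
  · rintro c ⟨p, rfl⟩
    rw [Dsum_eq_filter hn i]
    apply walk_weight_lb hn hw p
    intro j hjm
    rw [Finset.mem_filter] at hjm
    exact edges_lt_mem hn i p p.end_mem_support hjm.2

lemma wdist_right (hn : 3 ≤ n) (hw : ∀ i : Fin n, 0 < w s(i, i + 1)) (i : Fin n) :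
    wdist (CiG n i) w 0 (i+1) = Esum w i := by
  apply IsLeast.csInf_eq
  constructor
  · exact ⟨(pDn hn i).reverse, by rw [walkWeight_reverse, pDn_weight]⟩
  · rintro c ⟨p, rfl⟩
    rw [Esum_eq_filter hn i]
    apply walk_weight_lb hn hw p
    intro j hjm
    rw [Finset.mem_filter] at hjm
    exact edges_gt_mem hn i p p.end_mem_support hjm.2

/-- Lift a walk in the path graph to the ring. -/
def liftW {i a b : Fin n} (p : (CiG n i).Walk a b) : (ringGraph n).Walk a b :=
  p.transfer (ringGraph n) (fun e he => Ci_edgeSet_subset i (p.edges_subset_edgeSet he))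

lemma liftW_weight {i a b : Fin n} (p : (CiG n i).Walk a b) :
    walkWeight w (liftW p) = walkWeight w p := walkWeight_transfer p _

lemma liftW_support {i a b : Fin n} (p : (CiG n i).Walk a b) :
    (liftW p).support = p.support := SimpleGraph.Walk.support_transfer p _

/-- Single-walk strategy. -/
def strat1 {v : Fin n} (p : (ringGraph n).Walk 0 v) (hcov : ∀ u, u ∈ p.support) :
    ExplStrategy (ringGraph n) 0 where
  k := 1
  kpos := one_pos
  ends := fun _ => v
  walks := fun _ => p
  covers := fun u => ⟨0, hcov u⟩

lemma strat1_cost (q : ℝ) {v : Fin n} (p : (ringGraph n).Walk 0 v) (hcov : ∀ u, u ∈ p.support) :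
    stratCost w q (strat1 p hcov) = q + walkWeight w p := by
  unfold stratCost
  have h2 : ∑ j, walkWeight w ((strat1 p hcov).walks j) = walkWeight w p :=
    Fin.sum_univ_one (fun _ : Fin 1 => walkWeight w p)
  rw [h2]
  have h1 : ((strat1 p hcov).k : ℝ) = 1 := by norm_num [strat1]
  rw [h1]
  ring

/-- Two-walk strategy. -/
def strat2 {a b : Fin n} (p1 : (ringGraph n).Walk 0 a) (p2 : (ringGraph n).Walk 0 b)
    (hcov : ∀ u, u ∈ p1.support ∨ u ∈ p2.support) : ExplStrategy (ringGraph n) 0 where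
  k := 2
  kpos := two_pos
  ends := Fin.cases a (fun _ => b)
  walks := Fin.cases p1 (fun _ => p2)
  covers := fun u => (hcov u).elim
    (fun h => ⟨0, by exact h⟩)
    (fun h => ⟨1, by exact h⟩)

lemma strat2_cost (q : ℝ) {a b : Fin n} (p1 : (ringGraph n).Walk 0 a)
    (p2 : (ringGraph n).Walk 0 b) (hcov : ∀ u, u ∈ p1.support ∨ u ∈ p2.support) :
    stratCost w q (strat2 p1 p2 hcov) = 2 * q + (walkWeight w p1 + walkWeight w p2) := by
  unfold stratCost
  have h2 : ∑ j, walkWeight w ((strat2 p1 p2 hcov).walks j)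
      = walkWeight w p1 + walkWeight w p2 :=
    Fin.sum_univ_two (fun j : Fin 2 => walkWeight w ((strat2 p1 p2 hcov).walks j))
  rw [h2]
  have h1 : (((strat2 p1 p2 hcov).k) : ℝ) = 2 := by norm_num [strat2]
  rw [h1]

lemma cov_split (hn : 3 ≤ n) (i : Fin n) (u : Fin n) :
    u.val ≤ i.val ∨ (u = 0 ∨ i.val < u.val) := by
  rcases le_or_gt u.val i.val with h | h
  · exact Or.inl h
  · exact Or.inr (Or.inr h)

lemma exists_strat_pair (hn : 3 ≤ n) (q : ℝ) (i : Fin n) :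
    ∃ S : ExplStrategy (ringGraph n) 0,
      stratCost w q S = 2 * q + (Dsum w i + Esum w i) := by
  refine ⟨strat2 (liftW (pUp hn i)) (liftW (pDn hn i).reverse) ?_, ?_⟩
  · intro u
    rcases cov_split hn i u with h | h
    · left; rw [liftW_support]; exact pUp_support hn i h
    · right
      rw [liftW_support, SimpleGraph.Walk.support_reverse, List.mem_reverse]
      exact pDn_support hn i h
  · rw [strat2_cost, liftW_weight, liftW_weight, walkWeight_reverse,
      pUp_weight, pDn_weight]

lemma exists_strat_detourD (hn : 3 ≤ n) (q : ℝ) (i : Fin n) :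
    ∃ S : ExplStrategy (ringGraph n) 0,
      stratCost w q S = q + (Dsum w i + (Dsum w i + Esum w i)) := by
  set big : (CiG n i).Walk 0 (i+1) :=
    (pUp hn i).append ((pUp hn i).reverse.append (pDn hn i).reverse) with hbig
  refine ⟨strat1 (liftW big) ?_, ?_⟩
  · intro u
    rw [liftW_support, hbig, SimpleGraph.Walk.mem_support_append_iff,
      SimpleGraph.Walk.mem_support_append_iff]
    rcases cov_split hn i u with h | h
    · exact Or.inl (pUp_support hn i h)
    · right; right
      rw [SimpleGraph.Walk.support_reverse, List.mem_reverse]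
      exact pDn_support hn i h
  · rw [strat1_cost, liftW_weight, hbig, walkWeight_append, walkWeight_append,
      walkWeight_reverse, walkWeight_reverse, pUp_weight, pDn_weight]

lemma exists_strat_detourE (hn : 3 ≤ n) (q : ℝ) (i : Fin n) :
    ∃ S : ExplStrategy (ringGraph n) 0,
      stratCost w q S = q + (Esum w i + (Esum w i + Dsum w i)) := by
  set big : (CiG n i).Walk 0 i :=
    (pDn hn i).reverse.append ((pDn hn i).append (pUp hn i)) with hbig
  refine ⟨strat1 (liftW big) ?_, ?_⟩
  · intro u
    rw [liftW_support, hbig, SimpleGraph.Walk.mem_support_append_iff,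
      SimpleGraph.Walk.mem_support_append_iff]
    rcases cov_split hn i u with h | h
    · right; right; exact pUp_support hn i h
    · left
      rw [SimpleGraph.Walk.support_reverse, List.mem_reverse]
      exact pDn_support hn i h
  · rw [strat1_cost, liftW_weight, hbig, walkWeight_append, walkWeight_append,
      walkWeight_reverse, pUp_weight, pDn_weight]

lemma exists_strat_up_full (hn : 3 ≤ n) (q : ℝ) (i : Fin n) (h0 : i + 1 = 0) :
    ∃ S : ExplStrategy (ringGraph n) 0,
      stratCost w q S = q + Dsum w i := by
  have h2 : i.val = n - 1 := (fin_add_one_eq_zero_iff hn i).1 h0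
  refine ⟨strat1 (liftW (pUp hn i)) ?_, ?_⟩
  · intro u
    rw [liftW_support]
    exact pUp_support hn i (by have := u.isLt; omega)
  · rw [strat1_cost, liftW_weight, pUp_weight]

lemma exists_strat_dn_full (hn : 3 ≤ n) (q : ℝ) (i : Fin n) (h0 : i = 0) :
    ∃ S : ExplStrategy (ringGraph n) 0,
      stratCost w q S = q + Esum w i := by
  refine ⟨strat1 (liftW (pDn hn i).reverse) ?_, ?_⟩
  · intro u
    rw [liftW_support, SimpleGraph.Walk.support_reverse, List.mem_reverse]
    apply pDn_support hn i
    subst h0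
    rcases Nat.eq_zero_or_pos u.val with hz | hp
    · left; exact Fin.ext (by simpa using hz)
    · right; simpa using hp
  · rw [strat1_cost, liftW_weight, walkWeight_reverse, pDn_weight]

lemma ringCost_incident (hn : 3 ≤ n) (q : ℝ) (i : Fin n) (h : i = 0 ∨ i + 1 = 0) :
    ringCost n w q i = q + (Dsum w i + Esum w i) := by
  have ht := total_eq (w := w) hn i
  unfold ringCost
  rw [if_pos h, ht]
  ring

lemma ringCost_general (hn : 3 ≤ n) (hw : ∀ i : Fin n, 0 < w s(i, i + 1)) (q : ℝ)
    (i : Fin n) (h : ¬(i = 0 ∨ i + 1 = 0)) :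
    ringCost n w q i = min (2 * q + (Dsum w i + Esum w i))
      (q + min (Dsum w i) (Esum w i) + (Dsum w i + Esum w i)) := by
  have ht := total_eq (w := w) hn i
  unfold ringCost
  rw [if_neg h]
  rw [wdist_left hn hw i, wdist_right hn hw i]
  have hs : (∑ j : Fin n, w s(j, j + 1)) - w s(i, i+1) = Dsum w i + Esum w i := by
    rw [ht]; ring
  rw [hs]

lemma erase_sum_eq (hn : 3 ≤ n) (i : Fin n) :
    ∑ j ∈ Finset.univ.erase i, w s(j, j+1) = Dsum w i + Esum w i := by
  have h1 := Finset.add_sum_erase Finset.univ (fun j : Fin n => w s(j, j+1)) (Finset.mem_univ i)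
  have ht := total_eq (w := w) hn i
  linarith

lemma both_endpoints_lb (hn : 3 ≤ n) (hw : ∀ i : Fin n, 0 < w s(i, i + 1)) (i : Fin n)
    {v : Fin n} (p : (CiG n i).Walk 0 v) (h1 : i ∈ p.support) (h2 : i + 1 ∈ p.support) :
    min (Dsum w i) (Esum w i) + (Dsum w i + Esum w i) ≤ walkWeight w p := by
  have hCi := erase_sum_eq (w := w) hn i
  have hsplit : walkWeight w p
      = walkWeight w (p.takeUntil i h1) + walkWeight w (p.dropUntil i h1) := by
    conv_lhs => rw [← SimpleGraph.Walk.take_spec p h1]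
    rw [walkWeight_append]
  have h2' : i + 1 ∈ (p.takeUntil i h1).support ∨ i + 1 ∈ (p.dropUntil i h1).support := by
    rw [← SimpleGraph.Walk.mem_support_append_iff, SimpleGraph.Walk.take_spec p h1]
    exact h2
  rcases h2' with hmem | hmem
  · set p1 := p.takeUntil i h1 with hp1
    have hsplit1 : walkWeight w p1
        = walkWeight w (p1.takeUntil (i+1) hmem) + walkWeight w (p1.dropUntil (i+1) hmem) := by
      conv_lhs => rw [← SimpleGraph.Walk.take_spec p1 hmem]
      rw [walkWeight_append]
    have ha : Esum w i ≤ walkWeight w (p1.takeUntil (i+1) hmem) := by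
      rw [Esum_eq_filter hn i]
      apply walk_weight_lb hn hw
      intro j hj
      rw [Finset.mem_filter] at hj
      exact edges_gt_mem hn i _ (SimpleGraph.Walk.end_mem_support _) hj.2
    have hb : Dsum w i + Esum w i ≤ walkWeight w (p1.dropUntil (i+1) hmem) := by
      rw [← hCi]
      apply walk_weight_lb hn hw
      intro j hj
      exact edges_all_mem hn i _ (Or.inl ⟨rfl, rfl⟩) (Finset.mem_erase.mp hj).1
    have hc : 0 ≤ walkWeight w (p.dropUntil i h1) := walkWeight_nonneg_Ci hn hw _
    have hm : min (Dsum w i) (Esum w i) ≤ Esum w i := min_le_right _ _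
    linarith
  · set p2 := p.dropUntil i h1 with hp2
    have hsplit2 : walkWeight w p2
        = walkWeight w (p2.takeUntil (i+1) hmem) + walkWeight w (p2.dropUntil (i+1) hmem) := by
      conv_lhs => rw [← SimpleGraph.Walk.take_spec p2 hmem]
      rw [walkWeight_append]
    have ha : Dsum w i ≤ walkWeight w (p.takeUntil i h1) := by
      rw [Dsum_eq_filter hn i]
      apply walk_weight_lb hn hw
      intro j hj
      rw [Finset.mem_filter] at hj
      exact edges_lt_mem hn i _ (SimpleGraph.Walk.end_mem_support _) hj.2
    have hb : Dsum w i + Esum w i ≤ walkWeight w (p2.takeUntil (i+1) hmem) := by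
      rw [← hCi]
      apply walk_weight_lb hn hw
      intro j hj
      exact edges_all_mem hn i _ (Or.inr ⟨rfl, rfl⟩) (Finset.mem_erase.mp hj).1
    have hc : 0 ≤ walkWeight w (p2.dropUntil (i+1) hmem) := walkWeight_nonneg_Ci hn hw _
    have hm : min (Dsum w i) (Esum w i) ≤ Dsum w i := min_le_left _ _
    linarith

lemma sum_walks_nonneg (hn : 3 ≤ n) (hw : ∀ i : Fin n, 0 < w s(i, i + 1))
    (S : ExplStrategy (ringGraph n) 0) {idx : Fin S.k} :
    walkWeight w (S.walks idx) ≤ ∑ j, walkWeight w (S.walks j) :=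
  Finset.single_le_sum (fun j _ => walkWeight_nonneg_ring hn hw (S.walks j))
    (Finset.mem_univ idx)

lemma lower_bound (hn : 3 ≤ n) (hw : ∀ i : Fin n, 0 < w s(i, i + 1)) (q : ℝ) (hq : 0 ≤ q)
    (S : ExplStrategy (ringGraph n) 0) :
    ∃ i : Fin n, ringCost n w q i ≤ stratCost w q S := by
  have hkq : q ≤ (S.k : ℝ) * q := by
    have hk : (1:ℝ) ≤ (S.k : ℝ) := by exact_mod_cast S.kpos
    nlinarith
  by_cases hall : ∀ j : Fin n, ∃ idx, s(j, j+1) ∈ (S.walks idx).edges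
  · refine ⟨0, ?_⟩
    rw [ringCost_incident hn q 0 (Or.inl rfl)]
    choose f hf using hall
    have hsum : ∑ j : Fin n, w s(j, j+1) ≤ ∑ idx, walkWeight w (S.walks idx) := by
      rw [← Finset.sum_fiberwise Finset.univ f (fun j : Fin n => w s(j, j+1))]
      apply Finset.sum_le_sum
      intro idx _
      apply sum_edges_le hn w _ _ ?_ ?_
      · intro j hj
        rw [Finset.mem_filter] at hj
        exact hj.2 ▸ hf j
      · intro x hx
        exact ring_edge_nonneg hn hw x ((S.walks idx).edges_subset_edgeSet hx)
    have hD0 : Dsum w 0 = 0 := by unfold Dsum; simp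
    have hw0 := hw 0
    have ht := total_eq (w := w) hn 0
    unfold stratCost
    linarith
  · push_neg at hall
    obtain ⟨i, hi⟩ := hall
    have htrans : ∀ idx, ∀ e ∈ (S.walks idx).edges, e ∈ (CiG n i).edgeSet := by
      intro idx e he
      rw [SimpleGraph.edgeSet_deleteEdges, Set.mem_diff]
      refine ⟨(S.walks idx).edges_subset_edgeSet he, ?_⟩
      rw [Set.mem_singleton_iff]
      rintro rfl
      exact hi idx he
    refine ⟨i, ?_⟩
    by_cases hinc : i = 0 ∨ i + 1 = 0
    · rw [ringCost_incident hn q i hinc]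
      rcases hinc with h0 | h0
      · -- i = 0 : the far endpoint is i + 1
        obtain ⟨idx, hidx⟩ := S.covers (i+1)
        have hwlb : Esum w i ≤ walkWeight w (S.walks idx) := by
          rw [← walkWeight_transfer (S.walks idx) (htrans idx), Esum_eq_filter hn i]
          apply walk_weight_lb hn hw
          intro j hj
          rw [Finset.mem_filter] at hj
          apply edges_gt_mem hn i ((S.walks idx).transfer _ (htrans idx)) ?_ hj.2
          rw [SimpleGraph.Walk.support_transfer]
          exact hidx
        have hD0 : Dsum w i = 0 := by subst h0; unfold Dsum; simp
        have hle := sum_walks_nonneg hn hw S (idx := idx)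
        unfold stratCost
        linarith
      · -- i + 1 = 0 : the far endpoint is i
        obtain ⟨idx, hidx⟩ := S.covers i
        have hwlb : Dsum w i ≤ walkWeight w (S.walks idx) := by
          rw [← walkWeight_transfer (S.walks idx) (htrans idx), Dsum_eq_filter hn i]
          apply walk_weight_lb hn hw
          intro j hj
          rw [Finset.mem_filter] at hj
          apply edges_lt_mem hn i ((S.walks idx).transfer _ (htrans idx)) ?_ hj.2
          rw [SimpleGraph.Walk.support_transfer]
          exact hidx
        have hE0 : Esum w i = 0 := by
          have h2 : i.val = n - 1 := (fin_add_one_eq_zero_iff hn i).1 h0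
          unfold Esum
          rw [show n - 1 - i.val = 0 by omega]
          simp
        have hle := sum_walks_nonneg hn hw S (idx := idx)
        unfold stratCost
        linarith
    · rw [ringCost_general hn hw q i hinc]
      by_cases hone : ∃ idx, i ∈ (S.walks idx).support ∧ (i+1) ∈ (S.walks idx).support
      · obtain ⟨idx, hii, hii1⟩ := hone
        apply le_trans (min_le_right _ _)
        have hwlb : min (Dsum w i) (Esum w i) + (Dsum w i + Esum w i)
            ≤ walkWeight w (S.walks idx) := by
          rw [← walkWeight_transfer (S.walks idx) (htrans idx)]
          apply both_endpoints_lb hn hw i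
          · rw [SimpleGraph.Walk.support_transfer]; exact hii
          · rw [SimpleGraph.Walk.support_transfer]; exact hii1
        have hle := sum_walks_nonneg hn hw S (idx := idx)
        unfold stratCost
        linarith
      · push_neg at hone
        obtain ⟨i1, hi1⟩ := S.covers i
        obtain ⟨i2, hi2⟩ := S.covers (i+1)
        have hne : i1 ≠ i2 := by
          rintro rfl
          exact hone i1 hi1 hi2
        apply le_trans (min_le_left _ _)
        have hwlb1 : Dsum w i ≤ walkWeight w (S.walks i1) := by
          rw [← walkWeight_transfer (S.walks i1) (htrans i1), Dsum_eq_filter hn i]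
          apply walk_weight_lb hn hw
          intro j hj
          rw [Finset.mem_filter] at hj
          apply edges_lt_mem hn i ((S.walks i1).transfer _ (htrans i1)) ?_ hj.2
          rw [SimpleGraph.Walk.support_transfer]
          exact hi1
        have hwlb2 : Esum w i ≤ walkWeight w (S.walks i2) := by
          rw [← walkWeight_transfer (S.walks i2) (htrans i2), Esum_eq_filter hn i]
          apply walk_weight_lb hn hw
          intro j hj
          rw [Finset.mem_filter] at hj
          apply edges_gt_mem hn i ((S.walks i2).transfer _ (htrans i2)) ?_ hj.2
          rw [SimpleGraph.Walk.support_transfer]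
          exact hi2
        have hk2 : (2:ℝ) ≤ (S.k : ℝ) := by
          have : 1 < Fintype.card (Fin S.k) :=
            Fintype.one_lt_card_iff_nontrivial.mpr ⟨i1, i2, hne⟩
          rw [Fintype.card_fin] at this
          exact_mod_cast this
        have hkq2 : 2 * q ≤ (S.k : ℝ) * q := by nlinarith
        have hpair : walkWeight w (S.walks i1) + walkWeight w (S.walks i2)
            ≤ ∑ j, walkWeight w (S.walks j) := by
          have hsub : ({i1, i2} : Finset (Fin S.k)) ⊆ Finset.univ := Finset.subset_univ _
          have := Finset.sum_le_sum_of_subset_of_nonneg hsub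
            (fun j _ _ => walkWeight_nonneg_ring hn hw (S.walks j))
          rwa [Finset.sum_pair hne] at this
        unfold stratCost
        linarith

end RingPf


open RingPf in
/-- The minimum cost of an exploration strategy of an edge-weighted ring on `n ≥ 3`
vertices with homebase `v_0` and invoking cost `q ≥ 0` equals `min_{0 ≤ i ≤ n-1} c_i`. -/
theorem ring_offline_optimal (n : ℕ) [NeZero n] (hn : 3 ≤ n)
    (w : Sym2 (Fin n) → ℝ) (hw : ∀ i : Fin n, 0 < w s(i, i + 1))
    (q : ℝ) (hq : 0 ≤ q) :
    IsLeast {c : ℝ | ∃ S : ExplStrategy (ringGraph n) 0, stratCost w q S = c}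
      (Finset.univ.inf' (Finset.univ_nonempty_iff.mpr ⟨0⟩) (ringCost n w q)) := by
  constructor
  · -- membership : some strategy achieves the minimum
    obtain ⟨i0, -, hmin⟩ := Finset.exists_mem_eq_inf'
      (Finset.univ_nonempty_iff.mpr ⟨(0 : Fin n)⟩) (ringCost n w q)
    rw [hmin]
    simp only [Set.mem_setOf_eq]
    by_cases hinc : i0 = 0 ∨ i0 + 1 = 0
    · rw [ringCost_incident hn q i0 hinc]
      rcases hinc with h0 | h0
      · have hD0 : Dsum w i0 = 0 := by subst h0; unfold Dsum; simp
        obtain ⟨S, hS⟩ := exists_strat_dn_full (w := w) hn q i0 h0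
        exact ⟨S, by rw [hS, hD0]; ring⟩
      · have hE0 : Esum w i0 = 0 := by
          have h2 : i0.val = n - 1 := (fin_add_one_eq_zero_iff hn i0).1 h0
          unfold Esum
          rw [show n - 1 - i0.val = 0 by omega]
          simp
        obtain ⟨S, hS⟩ := exists_strat_up_full (w := w) hn q i0 h0
        exact ⟨S, by rw [hS, hE0]; ring⟩
    · rw [ringCost_general hn hw q i0 hinc]
      rcases le_total (2 * q + (Dsum w i0 + Esum w i0))
        (q + min (Dsum w i0) (Esum w i0) + (Dsum w i0 + Esum w i0)) with hAB | hAB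
      · rw [min_eq_left hAB]
        exact exists_strat_pair hn q i0
      · rw [min_eq_right hAB]
        rcases le_total (Dsum w i0) (Esum w i0) with hDE | hDE
        · rw [min_eq_left hDE]
          obtain ⟨S, hS⟩ := exists_strat_detourD (w := w) hn q i0
          exact ⟨S, by rw [hS]; ring⟩
        · rw [min_eq_right hDE]
          obtain ⟨S, hS⟩ := exists_strat_detourE (w := w) hn q i0
          exact ⟨S, by rw [hS]; ring⟩
  · -- lower bound
    rintro c ⟨S, rfl⟩
    obtain ⟨i, hle⟩ := lower_bound hn hw q hq S
    exact le_trans (Finset.inf'_le _ (Finset.mem_univ i)) hle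
end

section
/- For every exploration strategy of an edge-weighted cycle C on n ≥ 3 vertices from homebase v_0, at most one edge of C is traversed by no walk of the strategy; consequently the total distance traversed by the walks of the strategy is at least w(C) minus the maximum edge weight of C. -/
open SimpleGraph

namespace RingAux

set_option linter.unusedSectionVars false

variable {n : ℕ} [NeZero n]

lemma subv (x y : Fin n) :
    (y.val ≤ x.val ∧ (x - y).val = x.val - y.val) ∨
    (x.val < y.val ∧ (x - y).val = x.val + n - y.val) := by
  have hx := x.isLt; have hy := y.isLt
  rcases le_or_gt y.val x.val with h | h
  · left; refine ⟨h, ?_⟩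
    rw [Fin.sub_def]
    show (n - y.val + x.val) % n = x.val - y.val
    have e1 : n - y.val + x.val = (x.val - y.val) + n := by omega
    rw [e1, Nat.add_mod_right, Nat.mod_eq_of_lt (by omega)]
  · right; refine ⟨h, ?_⟩
    rw [Fin.sub_def]
    show (n - y.val + x.val) % n = x.val + n - y.val
    have e1 : n - y.val + x.val = x.val + n - y.val := by omega
    rw [e1, Nat.mod_eq_of_lt (by omega)]

lemma addv (hn : 3 ≤ n) (y : Fin n) :
    (y.val + 1 < n ∧ (y + 1).val = y.val + 1) ∨ (y.val + 1 = n ∧ (y + 1).val = 0) := by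
  have hy := y.isLt
  have h1 : (1 : Fin n).val = 1 := by rw [Fin.val_one', Nat.mod_eq_of_lt (by omega)]
  rcases lt_or_ge (y.val + 1) n with h | h
  · left; refine ⟨h, ?_⟩
    rw [Fin.add_def]
    show (y.val + (1:Fin n).val) % n = y.val + 1
    rw [h1, Nat.mod_eq_of_lt h]
  · right
    have hyn : y.val + 1 = n := by omega
    refine ⟨hyn, ?_⟩
    rw [Fin.add_def]
    show (y.val + (1:Fin n).val) % n = 0
    rw [h1, hyn, Nat.mod_self]

lemma totality (hn : 3 ≤ n) (i j x : Fin n) :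
    (x - (i+1)).val ≤ (j - (i+1)).val ∨ (x - (j+1)).val ≤ (i - (j+1)).val := by
  have h1 := subv x (i+1); have h2 := subv j (i+1)
  have h3 := subv x (j+1); have h4 := subv i (j+1)
  have h5 := addv hn i; have h6 := addv hn j
  have := x.isLt; have := i.isLt; have := j.isLt
  omega

lemma stepP (hn : 3 ≤ n) (y d : Fin n) (h : y.val < d.val) : (y + 1).val ≤ d.val := by
  have := addv hn y; have := d.isLt; omega

lemma stepM (hn : 3 ≤ n) (y d : Fin n) (h : y.val ≤ d.val) (hy : y ≠ 0) : (y - 1).val ≤ d.val := by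
  have h1 : (1 : Fin n).val = 1 := by rw [Fin.val_one', Nat.mod_eq_of_lt (by omega)]
  have hy' : y.val ≠ 0 := fun h' => hy (Fin.ext (by simp [h']))
  have := subv y 1; omega

lemma wrapzero (hn : 3 ≤ n) (d : Fin n) (h : (d + 1).val ≤ d.val) : d + 1 = 0 := by
  rcases addv hn d with ⟨h1, h2⟩ | ⟨h1, h2⟩
  · omega
  · exact Fin.ext (by simp [h2])

lemma edge_inj (hn : 3 ≤ n) {i j : Fin n} (h : s(i, i+1) = s(j, j+1)) : i = j := by
  rw [Sym2.eq_iff] at h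
  rcases h with ⟨h1, h2⟩ | ⟨h1, h2⟩
  · exact h1
  · exfalso
    -- h1 : i = j + 1, h2 : i + 1 = j
    have h3 : i = i + 1 + 1 := by rw [← h2] at h1; exact h1
    have := addv hn i
    have := addv hn (i + 1)
    have hi := i.isLt
    have hv : i.val = (i + 1 + 1).val := by rw [← h3]
    omega


lemma edge_form (hn : 3 ≤ n) {u v : Fin n} (p : (ringGraph n).Walk u v) :
    ∀ e ∈ p.edges, ∃ m : Fin n, e = s(m, m + 1) := by
  intro e he
  have hE := p.edges_subset_edgeSet he
  induction e using Sym2.ind with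
  | _ a b =>
    rw [SimpleGraph.mem_edgeSet] at hE
    rw [ringGraph, SimpleGraph.fromRel_adj] at hE
    obtain ⟨hab, h | h⟩ := hE
    · exact ⟨a, by rw [h]⟩
    · exact ⟨b, by rw [h]; exact Sym2.eq_swap⟩

lemma walk_stay (hn : 3 ≤ n) (i j : Fin n) {u v : Fin n} (p : (ringGraph n).Walk u v)
    (hi : s(i, i + 1) ∉ p.edges) (hj : s(j, j + 1) ∉ p.edges)
    (hu : (u - (i + 1)).val ≤ (j - (i + 1)).val) :
    ∀ y ∈ p.support, (y - (i + 1)).val ≤ (j - (i + 1)).val := by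
  induction p with
  | nil =>
    intro y hy
    rw [SimpleGraph.Walk.support_nil, List.mem_singleton] at hy
    subst hy; exact hu
  | @cons a b c h q ih =>
    rw [SimpleGraph.Walk.edges_cons, List.mem_cons] at hi hj
    push_neg at hi hj
    obtain ⟨hi1, hi2⟩ := hi
    obtain ⟨hj1, hj2⟩ := hj
    intro y hy
    rw [SimpleGraph.Walk.support_cons, List.mem_cons] at hy
    have hb : (b - (i + 1)).val ≤ (j - (i + 1)).val := by
      rw [ringGraph, SimpleGraph.fromRel_adj] at h
      obtain ⟨hab, hstep | hstep⟩ := h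
      · -- b = a + 1
        subst hstep
        have haj : a ≠ j := by
          intro hh; subst hh; exact hj1 rfl
        have hlt : (a - (i + 1)).val < (j - (i + 1)).val := by
          refine lt_of_le_of_ne hu (fun hv => haj ?_)
          have : a - (i + 1) = j - (i + 1) := Fin.ext hv
          exact sub_left_inj.mp this
        have := stepP hn (a - (i + 1)) (j - (i + 1)) hlt
        have e1 : a + 1 - (i + 1) = a - (i + 1) + 1 := by abel
        rw [e1]; exact this
      · -- a = b + 1
        have hbi : b ≠ i := by
          intro hh; subst hh
          exact hi1 (by rw [hstep]; exact Sym2.eq_swap)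
        have hb1 : a - (i + 1) ≠ 0 := by
          rw [hstep]
          intro hz
          apply hbi
          have : b + 1 - (i + 1) = b - i := by abel
          rw [this] at hz
          exact sub_eq_zero.mp hz
        have := stepM hn (a - (i + 1)) (j - (i + 1)) hu hb1
        have e1 : b - (i + 1) = a - (i + 1) - 1 := by rw [hstep]; abel
        rw [e1]; exact this
    rcases hy with hy | hy
    · subst hy; exact hu
    · exact ih hi2 hj2 hb y hy

lemma aux (hn : 3 ≤ n) (S : ExplStrategy (ringGraph n) 0) (i j : Fin n) (hij : i ≠ j)
    (hi : ∀ a, s(i, i + 1) ∉ (S.walks a).edges) (hj : ∀ a, s(j, j + 1) ∉ (S.walks a).edges)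
    (h0 : ((0 : Fin n) - (i + 1)).val ≤ (j - (i + 1)).val) : False := by
  obtain ⟨a, ha⟩ := S.covers (j + 1)
  have hst := walk_stay hn i j (S.walks a) (hi a) (hj a) h0 (j + 1) ha
  have e1 : j + 1 - (i + 1) = j - (i + 1) + 1 := by abel
  rw [e1] at hst
  have hz := wrapzero hn _ hst
  have e2 : j - (i + 1) + 1 = j - i := by abel
  rw [e2] at hz
  exact hij (sub_eq_zero.mp hz).symm

lemma toFinset_sum_le {α : Type*} [DecidableEq α] (l : List α) (f : α → ℝ)
    (h0 : ∀ x ∈ l, 0 ≤ f x) : ∑ x ∈ l.toFinset, f x ≤ (l.map f).sum := by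
  induction l with
  | nil => simp
  | cons a l ih =>
    simp only [List.toFinset_cons, List.map_cons, List.sum_cons]
    have ha : 0 ≤ f a := h0 a (by simp)
    have ih' := ih (fun x hx => h0 x (by simp [hx]))
    by_cases h : a ∈ l.toFinset
    · rw [Finset.insert_eq_self.mpr h]; linarith
    · rw [Finset.sum_insert h]; linarith

lemma finset_le_list {α : Type*} [DecidableEq α] (l : List α) (f : α → ℝ)
    (h0 : ∀ x ∈ l, 0 ≤ f x) (s : Finset α) (hs : ∀ x ∈ s, x ∈ l) :
    ∑ x ∈ s, f x ≤ (l.map f).sum := by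
  calc ∑ x ∈ s, f x ≤ ∑ x ∈ l.toFinset, f x :=
        Finset.sum_le_sum_of_subset_of_nonneg (fun x hx => List.mem_toFinset.mpr (hs x hx))
          (fun x hx _ => h0 x (List.mem_toFinset.mp hx))
    _ ≤ (l.map f).sum := toFinset_sum_le l f h0

end RingAux

/-- For every exploration strategy of an edge-weighted ring on `n ≥ 3` vertices from
homebase `v_0`: at most one edge is traversed by no walk of the strategy, and
consequently the total distance traversed is at least `w(C)` minus the maximum
edge weight. -/
theorem ring_at_most_one_edge_omitted (n : ℕ) [NeZero n] (hn : 3 ≤ n)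
    (w : Sym2 (Fin n) → ℝ) (hw : ∀ i : Fin n, 0 < w s(i, i + 1))
    (q : ℝ) (hq : 0 ≤ q)
    (S : ExplStrategy (ringGraph n) 0) :
    (∀ i j : Fin n,
        (∀ a, s(i, i + 1) ∉ (S.walks a).edges) →
        (∀ a, s(j, j + 1) ∉ (S.walks a).edges) → i = j) ∧
    (∑ j : Fin n, w s(j, j + 1)) -
        Finset.univ.sup' (Finset.univ_nonempty_iff.mpr ⟨0⟩) (fun i : Fin n => w s(i, i + 1))
      ≤ ∑ a, walkWeight w (S.walks a) := by
  classical
  have part1 : ∀ i j : Fin n,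
      (∀ a, s(i, i + 1) ∉ (S.walks a).edges) →
      (∀ a, s(j, j + 1) ∉ (S.walks a).edges) → i = j := by
    intro i j hi hj
    by_contra hne
    rcases RingAux.totality hn i j 0 with h | h
    · exact RingAux.aux hn S i j hne hi hj h
    · exact RingAux.aux hn S j i (Ne.symm hne) hj hi h
  refine ⟨part1, ?_⟩
  set M : ℝ := Finset.univ.sup' (Finset.univ_nonempty_iff.mpr ⟨0⟩)
      (fun i : Fin n => w s(i, i + 1)) with hM
  set U : Finset (Fin n) :=
      Finset.univ.filter (fun m => ∃ a, s(m, m + 1) ∈ (S.walks a).edges) with hU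
  -- the complement has at most one element
  have hcard : Uᶜ.card ≤ 1 := by
    rw [Finset.card_le_one]
    intro a ha b hb
    simp only [hU, Finset.mem_compl, Finset.mem_filter, Finset.mem_univ, true_and,
      not_exists] at ha hb
    exact part1 a b ha hb
  have hMle : ∀ m : Fin n, w s(m, m + 1) ≤ M :=
    fun m => Finset.le_sup' (fun i : Fin n => w s(i, i + 1)) (Finset.mem_univ m)
  have hM0 : 0 ≤ M := le_trans (le_of_lt (hw 0)) (hMle 0)
  have hcomp : ∑ m ∈ Uᶜ, w s(m, m + 1) ≤ M := by
    interval_cases h : Uᶜ.card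
    · rw [Finset.card_eq_zero] at h
      rw [h, Finset.sum_empty]; exact hM0
    · rw [Finset.card_eq_one] at h
      obtain ⟨m, hm⟩ := h
      rw [hm, Finset.sum_singleton]; exact hMle m
  -- the used edges account for at least their total weight
  have hdefault : Fin S.k := ⟨0, S.kpos⟩
  let g : Fin n → Fin S.k := fun m =>
    if h : ∃ a, s(m, m + 1) ∈ (S.walks a).edges then h.choose else hdefault
  have hg : ∀ m ∈ U, s(m, m + 1) ∈ (S.walks (g m)).edges := by
    intro m hm
    simp only [hU, Finset.mem_filter, Finset.mem_univ, true_and] at hm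
    have hgm : g m = hm.choose := dif_pos hm
    rw [hgm]
    exact hm.choose_spec
  have fib : ∑ a : Fin S.k, ∑ m ∈ U.filter (fun m => g m = a), w s(m, m + 1)
      = ∑ m ∈ U, w s(m, m + 1) :=
    Finset.sum_fiberwise_of_maps_to (fun m _ => Finset.mem_univ (g m)) _
  have per : ∀ a : Fin S.k,
      ∑ m ∈ U.filter (fun m => g m = a), w s(m, m + 1) ≤ walkWeight w (S.walks a) := by
    intro a
    have hinj : ∀ x ∈ U.filter (fun m => g m = a), ∀ y ∈ U.filter (fun m => g m = a),
        s(x, x + 1) = s(y, y + 1) → x = y := fun x _ y _ h => RingAux.edge_inj hn h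
    rw [← Finset.sum_image hinj]
    apply RingAux.finset_le_list
    · intro e he
      obtain ⟨m, hm⟩ := RingAux.edge_form hn (S.walks a) e he
      rw [hm]; exact le_of_lt (hw m)
    · intro e he
      rw [Finset.mem_image] at he
      obtain ⟨m, hm, hme⟩ := he
      rw [Finset.mem_filter] at hm
      rw [← hme, ← hm.2]
      exact hg m hm.1
  have key : ∑ m ∈ U, w s(m, m + 1) ≤ ∑ a, walkWeight w (S.walks a) := by
    rw [← fib]
    exact Finset.sum_le_sum (fun a _ => per a)
  have split := Finset.sum_add_sum_compl U (fun m : Fin n => w s(m, m + 1))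
  linarith
end

section
/- Let C be an edge-weighted cycle on n ≥ 3 vertices with homebase v_0, invoking cost q ≥ 0, and let w_max be the maximum edge weight of C. Then the minimum cost opt of an exploration strategy satisfies q + w(C) − w_max ≤ opt ≤ 2q + w(C) − w_max. -/
open SimpleGraph

section Aux
variable {n : ℕ} [NeZero n]
open Fin.NatCast Fin.CommRing

lemma ring_adj_succ (hn : 3 ≤ n) (x : Fin n) : (ringGraph n).Adj x (x+1) := by
  rw [ringGraph, fromRel_adj]
  refine ⟨fun h => ?_, Or.inl rfl⟩
  have h1 : (1 : Fin n) = 0 := (left_eq_add).mp h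
  rw [Fin.one_eq_zero_iff] at h1
  omega

lemma ring_edge_form {e : Sym2 (Fin n)} (he : e ∈ (ringGraph n).edgeSet) :
    ∃ i : Fin n, e = s(i, i+1) := by
  induction e with
  | _ x y =>
    rw [SimpleGraph.mem_edgeSet, ringGraph, fromRel_adj] at he
    obtain ⟨hne, h | h⟩ := he
    · exact ⟨x, by rw [h]⟩
    · exact ⟨y, by rw [h, Sym2.eq_swap]⟩

def fwd (hn : 3 ≤ n) (x : Fin n) : (k : ℕ) → (ringGraph n).Walk x (x + (k : Fin n))
  | 0 => SimpleGraph.Walk.nil.copy rfl (by simp)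
  | k+1 => ((fwd hn x k).concat (ring_adj_succ hn (x + k))).copy rfl (by push_cast; ring)

lemma fwd_support (hn : 3 ≤ n) (x : Fin n) (k : ℕ) (v : Fin n) :
    v ∈ (fwd hn x k).support ↔ ∃ j ≤ k, v = x + (j : Fin n) := by
  induction k with
  | zero => simp [fwd]
  | succ k ih =>
    simp only [fwd, SimpleGraph.Walk.support_copy, SimpleGraph.Walk.support_concat,
      List.concat_eq_append, List.mem_append, List.mem_singleton, ih]
    constructor
    · rintro (⟨j, hj, rfl⟩ | rfl)
      · exact ⟨j, by omega, rfl⟩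
      · exact ⟨k+1, le_refl _, by push_cast; ring⟩
    · rintro ⟨j, hj, rfl⟩
      rcases Nat.lt_or_ge j (k+1) with h | h
      · exact Or.inl ⟨j, by omega, rfl⟩
      · have : j = k + 1 := by omega
        subst this
        exact Or.inr (by push_cast; ring)

lemma fwd_weight (hn : 3 ≤ n) (w : Sym2 (Fin n) → ℝ) (x : Fin n) (k : ℕ) :
    walkWeight w (fwd hn x k) =
      ∑ j ∈ Finset.range k, w s(x + (j : Fin n), x + (j : Fin n) + 1) := by
  induction k with
  | zero => simp [fwd, walkWeight]
  | succ k ih =>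
    simp only [fwd, walkWeight, SimpleGraph.Walk.edges_copy, SimpleGraph.Walk.edges_concat,
      List.concat_eq_append, List.map_append, List.sum_append, Finset.sum_range_succ]
    rw [← walkWeight, ih]
    simp

lemma fin_add_one_val (hn : 3 ≤ n) (y : Fin n) (h : y.val < n - 1) :
    (y + 1).val = y.val + 1 := by
  obtain ⟨m, rfl⟩ : ∃ m, n = m + 1 := ⟨n - 1, by omega⟩
  exact Fin.val_add_one_of_lt (by rw [Fin.lt_iff_val_lt_val, Fin.val_last]; omega)

lemma fin_add_one_eq_zero (hn : 3 ≤ n) (y : Fin n) (h : y.val = n - 1) : y + 1 = 0 := by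
  obtain ⟨m, rfl⟩ : ∃ m, n = m + 1 := ⟨n - 1, by omega⟩
  have : y = Fin.last m := Fin.ext (by rw [Fin.val_last]; omega)
  rw [this, Fin.last_add_one]

lemma side_step (hn : 3 ≤ n) {a b x : Fin n} (hxa : x ≠ a) (hxb : x ≠ b) :
    ((x + 1 - (a+1)).val ≤ (b - (a+1)).val ↔ (x - (a+1)).val ≤ (b - (a+1)).val) := by
  have hsub : x + 1 - (a + 1) = (x - (a+1)) + 1 := by ring
  have hdn : (x - (a+1)).val < n := (x - (a+1)).isLt
  have hne : (x - (a+1)).val ≠ n - 1 := by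
    intro h
    apply hxa
    have h0 : (x - (a+1)) + 1 = 0 := fin_add_one_eq_zero hn _ h
    have h1 : x - a = 0 := by rw [← h0]; ring
    exact sub_eq_zero.mp h1
  have hval : (x + 1 - (a+1)).val = (x - (a+1)).val + 1 := by
    rw [hsub]
    exact fin_add_one_val hn _ (by omega)
  have hD : (b - (a+1)).val ≠ (x - (a+1)).val := by
    intro h
    apply hxb
    have : b - (a+1) = x - (a+1) := Fin.ext h
    exact (sub_left_inj.mp this).symm
  rw [hval]
  omega

lemma walk_side (hn : 3 ≤ n) {a b : Fin n} {u v : Fin n} (p : (ringGraph n).Walk u v)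
    (h1 : s(a, a+1) ∉ p.edges) (h2 : s(b, b+1) ∉ p.edges) :
    ∀ x ∈ p.support, ((x - (a+1)).val ≤ (b-(a+1)).val ↔ (u - (a+1)).val ≤ (b-(a+1)).val) := by
  induction p with
  | nil => intro x hx; rw [Walk.support_nil, List.mem_singleton] at hx; rw [hx]
  | @cons u u' v h p ih =>
    rw [Walk.edges_cons, List.mem_cons, not_or] at h1 h2
    have step : ((u' - (a+1)).val ≤ (b-(a+1)).val ↔ (u - (a+1)).val ≤ (b-(a+1)).val) := by
      rw [ringGraph, fromRel_adj] at h
      obtain ⟨hne, hc | hc⟩ := h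
      · subst hc
        have hua : u ≠ a := fun h => h1.1 (by rw [h])
        have hub : u ≠ b := fun h => h2.1 (by rw [h])
        exact side_step hn hua hub
      · subst hc
        have hua : u' ≠ a := fun h => h1.1 (by rw [h, Sym2.eq_swap])
        have hub : u' ≠ b := fun h => h2.1 (by rw [h, Sym2.eq_swap])
        exact (side_step hn hua hub).symm
    intro x hx
    rw [Walk.support_cons, List.mem_cons] at hx
    rcases hx with rfl | hx
    · rfl
    · rw [ih h1.2 h2.2 x hx, step]

lemma ring_two_missing (hn : 3 ≤ n) (S : ExplStrategy (ringGraph n) 0) {a b : Fin n}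
    (hab : a ≠ b)
    (h1 : ∀ i, s(a,a+1) ∉ (S.walks i).edges)
    (h2 : ∀ i, s(b,b+1) ∉ (S.walks i).edges) : False := by
  have hA : ((a+1) - (a+1)).val ≤ (b - (a+1)).val := by simp
  have ha1 : (a - (a+1)).val = n - 1 := by
    obtain ⟨m, rfl⟩ : ∃ m, n = m + 1 := ⟨n - 1, by omega⟩
    have hneg : (a - (a+1)) = -1 := by ring
    rw [hneg]
    simp
  have hb1 : (b - (a+1)).val ≠ n - 1 := by
    intro h
    apply hab
    have : b - (a+1) = a - (a+1) := Fin.ext (by rw [h, ha1])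
    exact (sub_left_inj.mp this).symm
  have haF : ¬ ((a - (a+1)).val ≤ (b - (a+1)).val) := by
    have := (b - (a+1)).isLt; omega
  by_cases h0 : (((0 : Fin n) - (a+1)).val ≤ (b - (a+1)).val)
  · obtain ⟨i, hi⟩ := S.covers a
    exact haF ((walk_side hn (S.walks i) (h1 i) (h2 i) a hi).mpr h0)
  · obtain ⟨i, hi⟩ := S.covers (a+1)
    exact h0 ((walk_side hn (S.walks i) (h1 i) (h2 i) (a+1) hi).mp hA)

end Aux

lemma toFinset_sum_le {α : Type*} [DecidableEq α] (w : α → ℝ) :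
    ∀ l : List α, (∀ a ∈ l, 0 ≤ w a) → ∑ e ∈ l.toFinset, w e ≤ (l.map w).sum
  | [], _ => by simp
  | a :: t, hl => by
    have ih := toFinset_sum_le w t (fun x hx => hl x (List.mem_cons_of_mem a hx))
    have ha := hl a (List.mem_cons_self (a := a) (l := t))
    simp only [List.toFinset_cons, List.map_cons, List.sum_cons]
    by_cases h : a ∈ t.toFinset
    · rw [Finset.insert_eq_self.mpr h]
      linarith
    · rw [Finset.sum_insert h]
      linarith

lemma sum_biUnion_le' {ι α : Type*} [DecidableEq α] (w : α → ℝ) (t : ι → Finset α)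
    (hw : ∀ i, ∀ e ∈ t i, 0 ≤ w e) (s : Finset ι) :
    ∑ e ∈ s.biUnion t, w e ≤ ∑ i ∈ s, ∑ e ∈ t i, w e := by
  classical
  induction s using Finset.induction_on with
  | empty => simp
  | @insert a s ha ih =>
    rw [Finset.biUnion_insert, Finset.sum_insert ha]
    have h1 := Finset.sum_union_inter (s₁ := t a) (s₂ := s.biUnion t) (f := w)
    have h2 : 0 ≤ ∑ e ∈ t a ∩ s.biUnion t, w e :=
      Finset.sum_nonneg (fun e he => hw a e (Finset.mem_of_mem_inter_left he))
    linarith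

/-- For an edge-weighted ring `C` on `n ≥ 3` vertices with homebase `v_0` and invoking
cost `q ≥ 0`, the minimum exploration cost `opt` satisfies
`q + w(C) - w_max ≤ opt ≤ 2q + w(C) - w_max`, where `w_max` is the maximum edge weight. -/
theorem ring_opt_bounds (n : ℕ) [NeZero n] (hn : 3 ≤ n)
    (w : Sym2 (Fin n) → ℝ) (hw : ∀ i : Fin n, 0 < w s(i, i + 1))
    (q : ℝ) (hq : 0 ≤ q) :
    q + ((∑ j : Fin n, w s(j, j + 1)) -
        Finset.univ.sup' (Finset.univ_nonempty_iff.mpr ⟨0⟩) (fun i : Fin n => w s(i, i + 1)))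
      ≤ sInf {c : ℝ | ∃ S : ExplStrategy (ringGraph n) 0, stratCost w q S = c} ∧
    sInf {c : ℝ | ∃ S : ExplStrategy (ringGraph n) 0, stratCost w q S = c}
      ≤ 2 * q + ((∑ j : Fin n, w s(j, j + 1)) -
        Finset.univ.sup' (Finset.univ_nonempty_iff.mpr ⟨0⟩) (fun i : Fin n => w s(i, i + 1))) := by
  open Fin.NatCast Fin.CommRing in
  classical
  set wmax := Finset.univ.sup' (Finset.univ_nonempty_iff.mpr ⟨0⟩)
      (fun i : Fin n => w s(i, i + 1)) with hwmax
  set T := ∑ j : Fin n, w s(j, j + 1) with hT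
  have hw' : ∀ e ∈ (ringGraph n).edgeSet, 0 < w e := by
    intro e he
    obtain ⟨i, rfl⟩ := ring_edge_form he
    exact hw i
  set f : ℕ → ℝ := fun j => w s((j : Fin n), (j : Fin n) + 1) with hf
  have hTf : T = ∑ j ∈ Finset.range n, f j := by
    rw [hT, ← Fin.sum_univ_eq_sum_range f n]
    apply Finset.sum_congr rfl
    intro i _
    simp [hf, Fin.cast_val_eq_self]
  -- ===================== Lower bound =====================
  have lower : ∀ S : ExplStrategy (ringGraph n) 0, q + (T - wmax) ≤ stratCost w q S := by
    intro S
    set U := Finset.univ.biUnion (fun i => (S.walks i).edges.toFinset) with hU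
    set E := Finset.image (fun i : Fin n => s(i, i+1)) Finset.univ with hE
    have hUE : U ⊆ E := by
      intro e he
      rw [hU, Finset.mem_biUnion] at he
      obtain ⟨i, _, hi⟩ := he
      rw [List.mem_toFinset] at hi
      obtain ⟨j, rfl⟩ := ring_edge_form ((S.walks i).edges_subset_edgeSet hi)
      exact Finset.mem_image_of_mem _ (Finset.mem_univ j)
    have hTE : ∑ e ∈ E, w e = T := by
      rw [hE, hT, Finset.sum_image]
      intro i _ j _ hij
      rw [Sym2.eq_iff] at hij
      rcases hij with ⟨h, _⟩ | ⟨h1, h2⟩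
      · exact h
      · exfalso
        have key : ((2 : ℕ) : Fin n) = 0 := by push_cast; linear_combination h2 - h1
        rw [Fin.natCast_eq_zero] at key
        have := Nat.le_of_dvd (by norm_num) key
        omega
    have hcard : (E \ U).card ≤ 1 := by
      by_contra hc
      push_neg at hc
      obtain ⟨e1, he1, e2, he2, hne⟩ := Finset.one_lt_card.mp hc
      have he1E := (Finset.mem_sdiff.mp he1).1
      have he2E := (Finset.mem_sdiff.mp he2).1
      rw [hE, Finset.mem_image] at he1E he2E
      obtain ⟨a, _, rfl⟩ := he1E
      obtain ⟨b, _, rfl⟩ := he2E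
      have hab : a ≠ b := fun h => hne (by rw [h])
      refine ring_two_missing hn S hab ?_ ?_
      · intro i hi
        exact (Finset.mem_sdiff.mp he1).2 (Finset.mem_biUnion.mpr
          ⟨i, Finset.mem_univ i, List.mem_toFinset.mpr hi⟩)
      · intro i hi
        exact (Finset.mem_sdiff.mp he2).2 (Finset.mem_biUnion.mpr
          ⟨i, Finset.mem_univ i, List.mem_toFinset.mpr hi⟩)
    have hwmax0 : 0 < wmax := by
      rw [hwmax]
      exact lt_of_lt_of_le (hw 0)
        (Finset.le_sup' (fun i : Fin n => w s(i, i + 1)) (Finset.mem_univ (0 : Fin n)))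
    have hmiss : ∑ e ∈ E \ U, w e ≤ wmax := by
      interval_cases h : (E \ U).card
      · rw [Finset.card_eq_zero.mp h, Finset.sum_empty]
        exact hwmax0.le
      · obtain ⟨e, he⟩ := Finset.card_eq_one.mp h
        rw [he, Finset.sum_singleton]
        have heE : e ∈ E := (Finset.sdiff_subset) (he ▸ Finset.mem_singleton_self e)
        rw [hE, Finset.mem_image] at heE
        obtain ⟨i, _, rfl⟩ := heE
        rw [hwmax]
        exact Finset.le_sup' (fun i : Fin n => w s(i, i + 1)) (Finset.mem_univ i)
    have hsumU : T - wmax ≤ ∑ e ∈ U, w e := by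
      have := Finset.sum_sdiff (f := w) hUE
      linarith
    have hwalks : ∑ e ∈ U, w e ≤ ∑ i, walkWeight w (S.walks i) := by
      refine le_trans (sum_biUnion_le' w _ ?_ Finset.univ) ?_
      · intro i e he
        rw [List.mem_toFinset] at he
        exact (hw' _ ((S.walks i).edges_subset_edgeSet he)).le
      · apply Finset.sum_le_sum
        intro i _
        exact toFinset_sum_le w _
          (fun e he => (hw' _ ((S.walks i).edges_subset_edgeSet he)).le)
    have hk : (1:ℝ) ≤ (S.k : ℝ) := by exact_mod_cast S.kpos
    have hkq : q ≤ (S.k : ℝ) * q := le_mul_of_one_le_left hq hk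
    rw [stratCost]
    linarith
  -- ===================== Upper bound strategy =====================
  obtain ⟨m, _, hm⟩ := Finset.exists_mem_eq_sup' (Finset.univ_nonempty_iff.mpr ⟨(0 : Fin n)⟩)
    (fun i : Fin n => w s(i, i + 1))
  have hmn : m.val < n := m.isLt
  have hend1 : (0 : Fin n) + ((m.val : ℕ) : Fin n) = m := by
    rw [zero_add, Fin.cast_val_eq_self]
  have hend2 : (m + 1) + ((n - 1 - m.val : ℕ) : Fin n) = 0 := by
    have e1 : ((m + 1) + ((n - 1 - m.val : ℕ) : Fin n)) = ((m.val + 1 + (n - 1 - m.val) : ℕ) : Fin n) := by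
      push_cast [Fin.cast_val_eq_self]
      ring
    rw [e1, show m.val + 1 + (n - 1 - m.val) = n by omega, Fin.natCast_self]
  let w1 : (ringGraph n).Walk 0 m := (fwd hn 0 m.val).copy rfl hend1
  let w2 : (ringGraph n).Walk 0 (m + 1) :=
    ((fwd hn (m+1) (n - 1 - m.val)).copy rfl hend2).reverse
  have cov : ∀ v : Fin n, v ∈ w1.support ∨ v ∈ w2.support := by
    intro v
    by_cases hv : v.val ≤ m.val
    · left
      rw [SimpleGraph.Walk.support_copy, fwd_support]
      exact ⟨v.val, hv, by rw [zero_add, Fin.cast_val_eq_self]⟩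
    · right
      rw [SimpleGraph.Walk.support_reverse, List.mem_reverse,
        SimpleGraph.Walk.support_copy, fwd_support]
      refine ⟨v.val - m.val - 1, by omega, ?_⟩
      have : (m + 1) + ((v.val - m.val - 1 : ℕ) : Fin n) = ((m.val + 1 + (v.val - m.val - 1) : ℕ) : Fin n) := by
        push_cast [Fin.cast_val_eq_self]
        ring
      rw [this, show m.val + 1 + (v.val - m.val - 1) = v.val by omega, Fin.cast_val_eq_self]
  let S0 : ExplStrategy (ringGraph n) 0 :=
    { k := 2
      kpos := by norm_num
      ends := fun i => match i with | ⟨0, _⟩ => m | ⟨1, _⟩ => m + 1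
      walks := fun i => match i with | ⟨0, _⟩ => w1 | ⟨1, _⟩ => w2
      covers := by
        intro v
        rcases cov v with h | h
        · exact ⟨⟨0, by norm_num⟩, h⟩
        · exact ⟨⟨1, by norm_num⟩, h⟩ }
  have hw1 : walkWeight w w1 = ∑ j ∈ Finset.range m.val, f j := by
    show walkWeight w ((fwd hn 0 m.val).copy rfl hend1) = _
    rw [walkWeight, SimpleGraph.Walk.edges_copy, ← walkWeight, fwd_weight]
    apply Finset.sum_congr rfl
    intro j _
    simp [hf]
  have hw2 : walkWeight w w2 = ∑ j ∈ Finset.Ico (m.val + 1) n, f j := by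
    show walkWeight w (((fwd hn (m+1) (n - 1 - m.val)).copy rfl hend2).reverse) = _
    rw [walkWeight, SimpleGraph.Walk.edges_reverse, List.map_reverse, List.sum_reverse,
      SimpleGraph.Walk.edges_copy, ← walkWeight, fwd_weight,
      Finset.sum_Ico_eq_sum_range, show n - (m.val + 1) = n - 1 - m.val by omega]
    apply Finset.sum_congr rfl
    intro j _
    have hc : (m + 1) + ((j : ℕ) : Fin n) = ((m.val + 1 + j : ℕ) : Fin n) := by
      push_cast [Fin.cast_val_eq_self]
      ring
    simp only [hf]
    rw [hc]
  have hsplit : ∑ j ∈ Finset.range m.val, f j + ∑ j ∈ Finset.Ico (m.val + 1) n, f j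
      = T - wmax := by
    have h1 : ∑ j ∈ Finset.Ico m.val n, f j = f m.val + ∑ j ∈ Finset.Ico (m.val + 1) n, f j :=
      Finset.sum_eq_sum_Ico_succ_bot hmn f
    have h2 : ∑ j ∈ Finset.Ico 0 m.val, f j + ∑ j ∈ Finset.Ico m.val n, f j
        = ∑ j ∈ Finset.Ico 0 n, f j :=
      Finset.sum_Ico_consecutive f (Nat.zero_le _) hmn.le
    have h3 : f m.val = wmax := by
      rw [hwmax, hm]
      simp [hf, Fin.cast_val_eq_self]
    simp only [← Finset.range_eq_Ico] at h2
    rw [hTf]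
    linarith
  have hcost : stratCost w q S0 = 2 * q + (T - wmax) := by
    rw [stratCost]
    have : ∑ i, walkWeight w (S0.walks i) = walkWeight w w1 + walkWeight w w2 := by
      rw [Fin.sum_univ_two]
    rw [this, hw1, hw2]
    push_cast
    rw [show (S0.k : ℝ) = 2 by simp [S0]]
    linarith [hsplit]
  have hbdd : BddBelow {c : ℝ | ∃ S : ExplStrategy (ringGraph n) 0, stratCost w q S = c} :=
    ⟨q + (T - wmax), by rintro c ⟨S, rfl⟩; exact lower S⟩
  have hmem : stratCost w q S0 ∈ {c : ℝ | ∃ S : ExplStrategy (ringGraph n) 0, stratCost w q S = c} :=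
    ⟨S0, rfl⟩
  constructor
  · exact le_csInf ⟨_, hmem⟩ (by rintro c ⟨S, rfl⟩; exact lower S)
  · calc sInf {c : ℝ | ∃ S : ExplStrategy (ringGraph n) 0, stratCost w q S = c}
        ≤ stratCost w q S0 := csInf_le hbdd hmem
      _ = 2 * q + (T - wmax) := hcost
end

section
/- Let C be a cycle on n ≥ 3 vertices in which every edge has the same weight ε > 0, with homebase v_0 and invoking cost q ≥ 0. Then the minimum cost of an exploration strategy of C equals q + ε·(n − 1). -/
open SimpleGraph

open Fin.NatCast Fin.CommRing

theorem fin_ne_succ (n : ℕ) (hn : 3 ≤ n) [NeZero n] (i : Fin n) : i ≠ i + 1 := by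
  intro h
  have h2 : (1 : Fin n) = 0 :=
    add_left_cancel (a := i) (b := (1:Fin n)) (c := 0) (by simpa using h.symm)
  have h3 : ((1:ℕ) : Fin n) = 0 := by simpa using h2
  rw [Fin.natCast_eq_zero] at h3
  have := Nat.le_of_dvd one_pos h3
  omega

theorem ring_adj (n : ℕ) (hn : 3 ≤ n) [NeZero n] (i : Fin n) :
    (ringGraph n).Adj i (i + 1) :=
  ⟨fin_ne_succ n hn i, Or.inl rfl⟩

/-- The walk i → i+1 → ... → i+m in the ring. -/
def pathWalk (n : ℕ) (hn : 3 ≤ n) [NeZero n] : (m : ℕ) → (i : Fin n) →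
    (ringGraph n).Walk i (i + (m : Fin n))
  | 0, i => (SimpleGraph.Walk.nil).copy rfl (by simp)
  | (m+1), i =>
      ((SimpleGraph.Walk.cons (ring_adj n hn i) (pathWalk n hn m (i+1))).copy rfl
        (by push_cast; ring))

theorem pathWalk_length (n : ℕ) (hn : 3 ≤ n) [NeZero n] (m : ℕ) (i : Fin n) :
    (pathWalk n hn m i).length = m := by
  induction m generalizing i with
  | zero => simp [pathWalk]
  | succ m ih => simp [pathWalk, ih]

theorem pathWalk_mem_support (n : ℕ) (hn : 3 ≤ n) [NeZero n] (m : ℕ) (i : Fin n)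
    (j : ℕ) (hj : j ≤ m) : i + (j : Fin n) ∈ (pathWalk n hn m i).support := by
  induction m generalizing i j with
  | zero =>
    interval_cases j
    simp [pathWalk]
  | succ m ih =>
    rcases Nat.eq_zero_or_pos j with h0 | hpos
    · subst h0; simp [pathWalk]
    · obtain ⟨j', rfl⟩ := Nat.exists_eq_succ_of_ne_zero (by omega : j ≠ 0)
      have : i + ((j' + 1 : ℕ) : Fin n) = (i + 1) + (j' : Fin n) := by push_cast; ring
      rw [this]
      simp only [pathWalk, SimpleGraph.Walk.support_copy, SimpleGraph.Walk.support_cons]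
      exact List.mem_cons_of_mem _ (ih (i+1) j' (by omega))

theorem walkWeight_const {V : Type*} {G : SimpleGraph V} (ε : ℝ) {a b : V}
    (p : G.Walk a b) : walkWeight (fun _ => ε) p = ε * p.length := by
  simp [walkWeight, List.map_const', mul_comm]


/-- For a ring on `n ≥ 3` vertices in which every edge has the same weight `ε > 0`,
with homebase `v_0` and invoking cost `q ≥ 0`, the minimum cost of an exploration
strategy equals `q + ε·(n - 1)`. -/
theorem ring_uniform_optimal (n : ℕ) [NeZero n] (hn : 3 ≤ n)
    (ε : ℝ) (hε : 0 < ε) (q : ℝ) (hq : 0 ≤ q) :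
    IsLeast {c : ℝ | ∃ S : ExplStrategy (ringGraph n) 0,
        stratCost (fun _ => ε) q S = c} (q + ε * ((n : ℝ) - 1)) := by
  constructor
  · -- membership: the single walk around the ring
    refine ⟨⟨1, one_pos, fun _ => (0 : Fin n) + ((n - 1 : ℕ) : Fin n),
        fun _ => pathWalk n hn (n-1) 0, ?_⟩, ?_⟩
    · intro v
      refine ⟨0, ?_⟩
      have : (0 : Fin n) + ((v.val : ℕ) : Fin n) = v := by
        simp [Fin.cast_val_eq_self]
      rw [← this]
      exact pathWalk_mem_support n hn (n-1) 0 v.val (by omega)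
    · simp only [stratCost]
      rw [Finset.sum_const, walkWeight_const, pathWalk_length]
      have : ((n - 1 : ℕ) : ℝ) = (n : ℝ) - 1 := by
        have : (1:ℕ) ≤ n := by omega
        push_cast [this]; ring
      simp [this]
  · -- lower bound
    rintro c ⟨S, rfl⟩
    have hk : (1 : ℝ) ≤ (S.k : ℝ) := by exact_mod_cast S.kpos
    have hq' : q ≤ (S.k : ℝ) * q := le_mul_of_one_le_left hq hk
    have hlen : n - 1 ≤ ∑ i, (S.walks i).length := by
      set F : Fin S.k → Finset (Fin n) := fun i => (S.walks i).support.toFinset with hF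
      have hmem : ∀ i, (0 : Fin n) ∈ F i := fun i => by
        simp [hF, SimpleGraph.Walk.start_mem_support]
      have hcard : ∀ i, (F i).card - 1 ≤ (S.walks i).length := by
        intro i
        have h1 : (F i).card ≤ (S.walks i).support.length := List.toFinset_card_le _
        have h2 : (S.walks i).support.length = (S.walks i).length + 1 :=
          SimpleGraph.Walk.length_support _
        omega
      have huniv : (Finset.univ : Finset (Fin n)) ⊆
          insert (0 : Fin n) (Finset.univ.biUnion (fun i => (F i).erase 0)) := by
        intro v _
        obtain ⟨i, hi⟩ := S.covers v
        rcases eq_or_ne v 0 with rfl | hv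
        · exact Finset.mem_insert_self _ _
        · refine Finset.mem_insert_of_mem (Finset.mem_biUnion.mpr ⟨i, Finset.mem_univ _, ?_⟩)
          exact Finset.mem_erase.mpr ⟨hv, by simp [hF, hi]⟩
      have hn1 : n ≤ 1 + ∑ i, ((F i).card - 1) := by
        calc n = (Finset.univ : Finset (Fin n)).card := by simp
          _ ≤ (insert (0 : Fin n) (Finset.univ.biUnion (fun i => (F i).erase 0))).card :=
              Finset.card_le_card huniv
          _ ≤ 1 + (Finset.univ.biUnion (fun i => (F i).erase 0)).card :=
              (Finset.card_insert_le _ _).trans (by omega)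
          _ ≤ 1 + ∑ i, ((F i).erase 0).card := by
              exact Nat.add_le_add_left (Finset.card_biUnion_le) 1
          _ = 1 + ∑ i, ((F i).card - 1) := by
              congr 1
              exact Finset.sum_congr rfl fun i _ =>
                Finset.card_erase_of_mem (hmem i)
      calc n - 1 ≤ ∑ i, ((F i).card - 1) := by omega
        _ ≤ ∑ i, (S.walks i).length := Finset.sum_le_sum fun i _ => hcard i
    have hsum : ε * ((n : ℝ) - 1) ≤ ∑ i, walkWeight (fun _ => ε) (S.walks i) := by
      have h1 : ((n : ℝ) - 1) ≤ ((∑ i, (S.walks i).length : ℕ) : ℝ) := by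
        have : ((n - 1 : ℕ) : ℝ) ≤ ((∑ i, (S.walks i).length : ℕ) : ℝ) := by
          exact_mod_cast hlen
        have hcast : ((n - 1 : ℕ) : ℝ) = (n : ℝ) - 1 := by
          have h1 : (1:ℕ) ≤ n := by omega
          push_cast [h1]; ring
        linarith [hcast ▸ this]
      calc ε * ((n : ℝ) - 1) ≤ ε * ((∑ i, (S.walks i).length : ℕ) : ℝ) := by
            exact mul_le_mul_of_nonneg_left h1 hε.le
        _ = ∑ i, walkWeight (fun _ => ε) (S.walks i) := by
            rw [Nat.cast_sum, Finset.mul_sum]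
            exact Finset.sum_congr rfl fun i _ => (walkWeight_const ε _).symm
    simp only [stratCost]
    linarith
end

section
/- Let T be a finite edge-weighted tree with at least two vertices, rooted at the homebase r, with invoking cost q ≥ 0, and let S be a cost-optimal exploration strategy for T. Then for every vertex v ≠ r, every walk of S that visits at least one vertex of the subtree T_v also visits at least one leaf of T_v. -/
open SimpleGraph

/-- A strategy is cost-optimal if no exploration strategy has strictly smaller cost. -/
def IsOptimal {V : Type*} {G : SimpleGraph V} {h : V} (w : Sym2 V → ℝ) (q : ℝ)
    (S : ExplStrategy G h) : Prop :=
  ∀ S' : ExplStrategy G h, stratCost w q S ≤ stratCost w q S'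

/-- `u` belongs to the subtree `T_v` of the tree `G` rooted at `r`:
`v` lies on every (equivalently, in a tree, the unique) path from `r` to `u`. -/
def InSubtree {V : Type*} (G : SimpleGraph V) (r v u : V) : Prop :=
  ∀ p : G.Path r u, v ∈ p.1.support

/-- `x` is a leaf of the tree `G` rooted at `r`: a vertex of degree 1 different
from the root. -/
def IsTLeaf {V : Type*} (G : SimpleGraph V) (r x : V) : Prop :=
  x ≠ r ∧ ∃! y, G.Adj x y

/-- `u` is a child of `v` in the tree `G` rooted at `r`. -/
def IsTChild {V : Type*} (G : SimpleGraph V) (r v u : V) : Prop :=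
  G.Adj v u ∧ InSubtree G r v u

open scoped Classical in
/-- Total edge weight of the graph `G`. -/
noncomputable def totalWeight {V : Type*} [Fintype V] (G : SimpleGraph V)
    (w : Sym2 V → ℝ) : ℝ :=
  ∑ e : Sym2 V, if e ∈ G.edgeSet then w e else 0



private lemma walkWeight0_append {V : Type*} {G : SimpleGraph V} (w : Sym2 V → ℝ)
    {a b c : V} (p : G.Walk a b) (q : G.Walk b c) :
    walkWeight w (p.append q) = walkWeight w p + walkWeight w q := by
  simp [walkWeight, SimpleGraph.Walk.edges_append]

private lemma walkWeight0_concat {V : Type*} {G : SimpleGraph V} (w : Sym2 V → ℝ)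
    {a b c : V} (p : G.Walk a b) (h : G.Adj b c) :
    walkWeight w (p.concat h) = walkWeight w p + w s(b, c) := by
  simp [walkWeight, SimpleGraph.Walk.edges_concat]

private lemma walkWeight0_cons {V : Type*} {G : SimpleGraph V} (w : Sym2 V → ℝ)
    {a b c : V} (h : G.Adj a b) (p : G.Walk b c) :
    walkWeight w (Walk.cons h p) = w s(a, b) + walkWeight w p := by
  simp [walkWeight]

private lemma walkWeight0_copy {V : Type*} {G : SimpleGraph V} (w : Sym2 V → ℝ)
    {a b a' b' : V} (p : G.Walk a b) (ha : a = a') (hb : b = b') :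
    walkWeight w (p.copy ha hb) = walkWeight w p := by
  simp [walkWeight, SimpleGraph.Walk.edges_copy]

/-- In every cost-optimal exploration strategy of an edge-weighted tree, if a walk
visits a vertex of the subtree `T_v` (`v ≠ r`), then it visits a leaf of `T_v`. -/
theorem walk_entering_subtree_visits_leaf {V : Type*} [Fintype V]
    (G : SimpleGraph V) (hG : G.IsTree) (hcard : 1 < Fintype.card V)
    (r : V) (w : Sym2 V → ℝ) (hw : ∀ e ∈ G.edgeSet, 0 < w e)
    (q : ℝ) (hq : 0 ≤ q)
    (S : ExplStrategy G r) (hS : IsOptimal w q S)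
    (v : V) (hv : v ≠ r) (a : Fin S.k)
    (hvisit : ∃ u ∈ (S.walks a).support, InSubtree G r v u) :
    ∃ x, IsTLeaf G r x ∧ InSubtree G r v x ∧ x ∈ (S.walks a).support := by
  classical
  by_contra hcon
  push_neg at hcon
  obtain ⟨-, huniq⟩ := isTree_iff_existsUnique_path.mp hG
  -- canonical paths from the root
  let cp : (u : V) → G.Walk r u := fun u => (huniq r u).choose
  have cpPath : ∀ u, (cp u).IsPath := fun u => (huniq r u).choose_spec.1
  have cpU : ∀ u (p : G.Walk r u), p.IsPath → p = cp u :=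
    fun u p hp => (huniq r u).choose_spec.2 p hp
  -- the set of visited subtree vertices, and a deepest one
  let A : Finset V := Finset.univ.filter
    (fun u => u ∈ (S.walks a).support ∧ InSubtree G r v u)
  have hAne : A.Nonempty := by
    obtain ⟨u0, hu1, hu2⟩ := hvisit
    exact ⟨u0, by simp only [A, Finset.mem_filter, Finset.mem_univ, true_and]; exact ⟨hu1, hu2⟩⟩
  obtain ⟨m, hmA, hmax⟩ := A.exists_max_image (fun u => (cp u).length) hAne
  rw [Finset.mem_filter] at hmA
  obtain ⟨-, hmW, hmT⟩ := hmA
  have hmr : m ≠ r := by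
    intro h; subst h
    have := hmT ⟨Walk.nil, Walk.IsPath.nil⟩
    simp only [Walk.support_nil, List.mem_singleton] at this
    exact hv this
  have hvm : v ∈ (cp m).support := hmT ⟨cp m, cpPath m⟩
  -- decompose the canonical path to m : its last edge comes from the parent p
  have hcpnn : ¬ (cp m).reverse.Nil := by
    rw [Walk.nil_iff_length_eq, Walk.length_reverse]
    intro h0; exact hmr (Walk.eq_of_length_eq_zero h0).symm
  obtain ⟨p, hmp, Qr, hQr⟩ := Walk.not_nil_iff.mp hcpnn
  have hcpm : cp m = Qr.reverse.concat hmp.symm := by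
    have h1 := congrArg Walk.reverse hQr
    rw [Walk.reverse_reverse] at h1
    rw [h1, Walk.reverse_cons, Walk.concat_eq_append]
  -- uniqueness of the last-edge decomposition
  have factU : ∀ (z : V) (P : G.Walk r z) (h' : G.Adj z m), P.concat h' = cp m → z = p := by
    intro z P h' hEq
    have h1 : (P.concat h').reverse.support = (Qr.reverse.concat hmp.symm).reverse.support := by
      rw [hEq, ← hcpm]
    rw [Walk.reverse_concat, Walk.reverse_concat, Walk.support_cons, Walk.support_cons,
      Walk.support_eq_cons P.reverse, Walk.support_eq_cons Qr.reverse.reverse] at h1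
    simp only [List.cons.injEq] at h1
    exact h1.2.1
  -- a neighbor of m whose canonical path misses m must be the parent
  have factP : ∀ z, G.Adj m z → m ∉ (cp z).support → z = p := by
    intro z hz hno
    have hP : ((cp z).concat hz.symm).IsPath := by
      rw [Walk.isPath_def, Walk.support_concat]
      refine List.Nodup.append (cpPath z).support_nodup (List.nodup_singleton m) ?_
      intro b hb hbm
      rw [List.mem_singleton] at hbm; subst hbm; exact hno hb
    exact factU z (cp z) hz.symm (cpU m _ hP)
  -- every neighbor of m visited by walk a is the parent p
  have key : ∀ z, G.Adj m z → z ∈ (S.walks a).support → z = p := by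
    intro z hz hzW
    by_cases hmPz : m ∈ (cp z).support
    · exfalso
      have htu : (cp z).takeUntil m hmPz = cp m := cpU m _ ((cpPath z).takeUntil hmPz)
      have hlen := congrArg Walk.length ((cp z).take_spec hmPz)
      rw [Walk.length_append] at hlen
      have hd : ((cp z).dropUntil m hmPz).length ≠ 0 :=
        fun h0 => hz.ne (Walk.eq_of_length_eq_zero h0)
      have hlt : (cp m).length < (cp z).length := by rw [← htu]; omega
      have hvz : v ∈ (cp z).support :=
        (cp z).support_takeUntil_subset hmPz (htu ▸ hvm)
      have hzT : InSubtree G r v z := by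
        intro P; rw [cpU z P.1 P.2]; exact hvz
      have hzA : z ∈ A := by
        simp only [A, Finset.mem_filter, Finset.mem_univ, true_and]; exact ⟨hzW, hzT⟩
      have := hmax z hzA
      omega
    · exact factP z hz hmPz
  -- m is not a leaf, so it has a child c, which walk a does not visit
  have hnl : ¬ IsTLeaf G r m := fun hl => hcon m hl hmT hmW
  have hc : ∃ c, G.Adj m c ∧ c ≠ p := by
    by_contra h; push_neg at h
    exact hnl ⟨hmr, p, hmp, fun y hy => h y hy⟩
  obtain ⟨c, hmc, hcp⟩ := hc
  have hcW : c ∉ (S.walks a).support := fun hmem => hcp (key c hmc hmem)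
  have hmPc : m ∈ (cp c).support := by
    by_contra hno; exact hcp (factP c hmc hno)
  -- the walk covering c also covers m, and it is not walk a
  obtain ⟨i, hic⟩ := S.covers c
  have hia : i ≠ a := fun h => hcW (h ▸ hic)
  have him : m ∈ (S.walks i).support := by
    have hb : ((S.walks i).takeUntil c hic).bypass = cp c :=
      cpU c _ (Walk.bypass_isPath _)
    have : m ∈ ((S.walks i).takeUntil c hic).bypass.support := by rw [hb]; exact hmPc
    exact (S.walks i).support_takeUntil_subset hic (Walk.support_bypass_subset _ this)
  -- surgery: shortcut walk a around (one visit of) m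
  obtain ⟨e', W', hlt, hsup⟩ : ∃ (e' : V) (W' : G.Walk r e'),
      walkWeight w W' < walkWeight w (S.walks a) ∧
      ∀ u ∈ (S.walks a).support, u ≠ m → u ∈ W'.support := by
    set W1 := (S.walks a).takeUntil m hmW with hW1def
    set W2 := (S.walks a).dropUntil m hmW with hW2def
    have hspec : W1.append W2 = S.walks a := (S.walks a).take_spec hmW
    have hW1nn : ¬ W1.reverse.Nil := by
      rw [Walk.nil_iff_length_eq, Walk.length_reverse]
      intro h0; exact hmr (Walk.eq_of_length_eq_zero h0).symm
    obtain ⟨x, hmx, qr, hqr⟩ := Walk.not_nil_iff.mp hW1nn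
    have hW1 : W1 = qr.reverse.concat hmx.symm := by
      have h1 := congrArg Walk.reverse hqr
      rw [Walk.reverse_reverse] at h1
      rw [h1, Walk.reverse_cons, Walk.concat_eq_append]
    have hxW : x ∈ (S.walks a).support := by
      have hx1 : x ∈ W1.support := by
        rw [hW1, Walk.support_concat]
        exact List.mem_append_left _ qr.reverse.end_mem_support
      exact (S.walks a).support_takeUntil_subset hmW hx1
    have hwx : 0 < w s(x, m) := hw _ ((SimpleGraph.mem_edgeSet G).mpr hmx.symm)
    by_cases hn2 : W2.Nil
    · refine ⟨x, qr.reverse, ?_, ?_⟩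
      · have h2 : walkWeight w W2 = 0 := by
          have hlen : W2.edges = [] := List.length_eq_zero_iff.mp
            (by rw [Walk.length_edges]; exact Walk.nil_iff_length_eq.mp hn2)
          simp [walkWeight, hlen]
        calc walkWeight w qr.reverse < walkWeight w qr.reverse + w s(x, m) := by linarith
          _ = walkWeight w W1 := by rw [hW1, walkWeight0_concat]
          _ = walkWeight w W1 + walkWeight w W2 := by rw [h2]; ring
          _ = walkWeight w (S.walks a) := by rw [← walkWeight0_append, hspec]
      · intro u hu hum
        rw [← hspec] at hu
        rcases (Walk.mem_support_append_iff _ _).mp hu with h1 | h2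
        · rw [hW1, Walk.support_concat, List.mem_append] at h1
          rcases h1 with h1 | h1
          · exact h1
          · rw [List.mem_singleton] at h1; exact absurd h1 hum
        · rw [Walk.nil_iff_support_eq.mp hn2, List.mem_singleton] at h2
          exact absurd h2 hum
    · obtain ⟨y, hmy, W2', hW2⟩ := Walk.not_nil_iff.mp hn2
      have hyW : y ∈ (S.walks a).support := by
        have hy1 : y ∈ W2.support := by
          rw [hW2, Walk.support_cons]
          exact List.mem_cons_of_mem _ W2'.start_mem_support
        exact (S.walks a).support_dropUntil_subset hmW hy1
      have hyx : y = x := (key y hmy hyW).trans (key x hmx hxW).symm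
      refine ⟨S.ends a, qr.reverse.append (W2'.copy hyx rfl), ?_, ?_⟩
      · have hwy : 0 < w s(m, y) := hw _ ((SimpleGraph.mem_edgeSet G).mpr hmy)
        have e1 : walkWeight w (S.walks a) =
            walkWeight w qr.reverse + w s(x, m) + (w s(m, y) + walkWeight w W2') := by
          rw [← hspec, walkWeight0_append, hW1, walkWeight0_concat, hW2, walkWeight0_cons]
        have e2 : walkWeight w (qr.reverse.append (W2'.copy hyx rfl)) =
            walkWeight w qr.reverse + walkWeight w W2' := by
          rw [walkWeight0_append, walkWeight0_copy]
        rw [e1, e2]; linarith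
      · intro u hu hum
        rw [← hspec] at hu
        rw [Walk.mem_support_append_iff]
        rcases (Walk.mem_support_append_iff _ _).mp hu with h1 | h2
        · left
          rw [hW1, Walk.support_concat, List.mem_append] at h1
          rcases h1 with h1 | h1
          · exact h1
          · rw [List.mem_singleton] at h1; exact absurd h1 hum
        · right
          rw [hW2, Walk.support_cons] at h2
          rcases List.mem_cons.mp h2 with h2 | h2
          · exact absurd h2 hum
          · rw [Walk.support_copy]; exact h2
  -- build the cheaper strategy
  let f : Fin S.k → (t : V) × G.Walk r t := fun j => ⟨S.ends j, S.walks j⟩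
  let f' : Fin S.k → (t : V) × G.Walk r t := Function.update f a ⟨e', W'⟩
  have hf'a : f' a = ⟨e', W'⟩ := Function.update_self a _ f
  have hf'ne : ∀ j, j ≠ a → f' j = f j := fun j hj => Function.update_of_ne hj _ f
  let S' : ExplStrategy G r :=
    { k := S.k, kpos := S.kpos,
      ends := fun j => (f' j).1,
      walks := fun j => (f' j).2,
      covers := by
        intro u
        by_cases hum : u = m
        · subst hum
          refine ⟨i, ?_⟩
          show u ∈ (f' i).2.support
          rw [hf'ne i hia]
          exact him
        · obtain ⟨j, hj⟩ := S.covers u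
          by_cases hja : j = a
          · subst hja
            refine ⟨j, ?_⟩
            show u ∈ (f' j).2.support
            rw [hf'a]
            exact hsup u hj hum
          · refine ⟨j, ?_⟩
            show u ∈ (f' j).2.support
            rw [hf'ne j hja]
            exact hj }
  have hsum : ∑ j : Fin S.k, walkWeight w ((f' j).2) <
      ∑ j : Fin S.k, walkWeight w (S.walks j) := by
    apply Finset.sum_lt_sum
    · intro j _
      by_cases hja : j = a
      · subst hja; rw [hf'a]; exact hlt.le
      · rw [hf'ne j hja]
    · exact ⟨a, Finset.mem_univ a, by rw [hf'a]; exact hlt⟩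
  have hcost : stratCost w q S' < stratCost w q S := by
    show (S.k : ℝ) * q + ∑ j : Fin S.k, walkWeight w ((f' j).2) <
      (S.k : ℝ) * q + ∑ j : Fin S.k, walkWeight w (S.walks j)
    exact (add_lt_add_iff_left _).mpr hsum
  exact absurd (hS S') (not_le.mpr hcost)
end

section
/- Let T be a finite edge-weighted tree with at least two vertices, rooted at the homebase r, with invoking cost q ≥ 0, and let S be a cost-optimal exploration strategy for T. Then for every walk W of S and every vertex v ≠ r, the set of positions at which W occupies a vertex of the subtree T_v is a set of consecutive indices; that is, once a walk of a cost-optimal strategy leaves a subtree it never returns to it. -/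
open SimpleGraph

section Aux

variable {V : Type*} {G : SimpleGraph V}

private lemma getD_support_eq_getVert {a b : V} (p : G.Walk a b) (d : V) :
    ∀ t, t ≤ p.length → p.support.getD t d = p.getVert t := by
  induction p with
  | nil =>
    intro t ht
    have : t = 0 := by simpa using ht
    subst this
    simp [Walk.getVert_zero]
  | cons h q ih =>
    intro t ht
    cases t with
    | zero => simp
    | succ t =>
      rw [Walk.support_cons, List.getD_cons_succ, Walk.getVert_cons_succ]
      exact ih t (by simpa [Walk.length_cons] using ht)

private lemma walk_split {x y : V} :
    ∀ (W : G.Walk x y) (t : ℕ) (u u' : V), t < W.length →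
      W.getVert t = u → W.getVert (t+1) = u' →
      ∃ (A : G.Walk x u) (B : G.Walk u' y) (h : G.Adj u u'),
        W = A.append (Walk.cons h B) ∧ A.length = t := by
  intro W
  induction W with
  | nil => intro t u u' ht; simp at ht
  | @cons a b y h q ih =>
    intro t u u' ht h1 h2
    cases t with
    | zero =>
      rw [Walk.getVert_zero] at h1
      rw [Walk.getVert_cons_succ, Walk.getVert_zero] at h2
      subst h1; subst h2
      exact ⟨Walk.nil, q, h, by simp, rfl⟩
    | succ t =>
      rw [Walk.getVert_cons_succ] at h1 h2
      obtain ⟨A, B, hadj, hEq, hlen⟩ :=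
        ih t u u' (by simpa [Walk.length_cons] using ht) h1 h2
      refine ⟨Walk.cons h A, B, hadj, ?_, by simp [Walk.length_cons, hlen]⟩
      rw [Walk.cons_append, ← hEq]

private lemma walk_surgery {x y : V} (w : Sym2 V → ℝ)
    (hw : ∀ e ∈ G.edgeSet, 0 < w e)
    (W : G.Walk x y) (t1 t3 : ℕ) (h13 : t1 < t3) (ht3 : t3 < W.length)
    (hu : W.getVert t1 = W.getVert t3) (hv : W.getVert (t1+1) = W.getVert (t3+1)) :
    ∃ W' : G.Walk x y, (∀ z ∈ W.support, z ∈ W'.support) ∧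
      walkWeight w W' < walkWeight w W := by
  obtain ⟨A, B, h1, hW, hA⟩ :=
    walk_split W t1 (W.getVert t1) (W.getVert (t1+1)) (h13.trans ht3) rfl rfl
  have hlenW : W.length = t1 + 1 + B.length := by
    have := congrArg Walk.length hW
    simp only [Walk.length_append, Walk.length_cons, hA] at this
    omega
  have hgB : ∀ n, W.getVert (t1 + 1 + n) = B.getVert n := by
    intro n
    have := congrArg (fun (p : G.Walk x y) => p.getVert (t1 + 1 + n)) hW
    rw [this, Walk.getVert_append, hA, if_neg (by omega),
      show t1 + 1 + n - t1 = n + 1 by omega, Walk.getVert_cons_succ]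
  set s := t3 - t1 - 1 with hs
  have hs3 : s < B.length := by omega
  have eq1 : B.getVert s = W.getVert t1 := by
    rw [← hgB s, show t1 + 1 + s = t3 by omega, hu]
  have eq2 : B.getVert (s+1) = W.getVert (t1+1) := by
    rw [← hgB (s+1), show t1 + 1 + (s+1) = t3 + 1 by omega, hv]
  obtain ⟨C, D, h2, hB, hC⟩ :=
    walk_split B s (W.getVert t1) (W.getVert (t1+1)) hs3 eq1 eq2
  refine ⟨A.append (C.reverse.append D), ?_, ?_⟩
  · intro z hz
    have h1s := congrArg Walk.support hW
    have h2s := congrArg Walk.support hB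
    rw [h1s] at hz
    simp only [Walk.mem_support_append_iff, Walk.support_cons, List.mem_cons] at hz
    rw [h2s] at hz
    simp only [Walk.mem_support_append_iff, Walk.support_cons, List.mem_cons,
      Walk.support_reverse, List.mem_reverse] at hz
    simp only [Walk.mem_support_append_iff, Walk.support_reverse, List.mem_reverse]
    have hend : W.getVert t1 ∈ A.support := A.end_mem_support
    have hend2 : W.getVert t1 ∈ C.support := C.end_mem_support
    rcases hz with hz | hz | hz | hz | hz
    · exact Or.inl hz
    · exact Or.inl (hz ▸ hend)
    · exact Or.inr (Or.inl hz)
    · exact Or.inr (Or.inl (hz ▸ hend2))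
    · exact Or.inr (Or.inr hz)
  · have hWe : W.edges = A.edges ++ (s(W.getVert t1, W.getVert (t1+1)) ::
        (C.edges ++ s(W.getVert t1, W.getVert (t1+1)) :: D.edges)) := by
      have h1e := congrArg Walk.edges hW
      have h2e := congrArg Walk.edges hB
      rw [h1e]
      simp only [Walk.edges_append, Walk.edges_cons]
      rw [h2e]
      simp [Walk.edges_append, Walk.edges_cons]
    have hW'e : (A.append (C.reverse.append D)).edges =
        A.edges ++ (C.edges.reverse ++ D.edges) := by
      simp [Walk.edges_append, Walk.edges_reverse]
    have hpos : 0 < w s(W.getVert t1, W.getVert (t1+1)) :=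
      hw _ (G.mem_edgeSet.mpr h1)
    unfold walkWeight
    rw [hWe, hW'e]
    simp only [List.map_append, List.sum_append, List.map_cons, List.sum_cons,
      List.map_reverse, List.sum_reverse]
    linarith

private lemma exists_transition (P : ℕ → Prop) :
    ∀ b a, a ≤ b → ¬ P a → P b → ∃ t, a ≤ t ∧ t < b ∧ ¬ P t ∧ P (t+1) := by
  classical
  intro b
  induction b with
  | zero =>
    intro a ha hna hp
    have : a = 0 := by omega
    subst this
    exact (hna hp).elim
  | succ b ih =>
    intro a ha hna hp
    by_cases hab : a = b + 1
    · subst hab; exact (hna hp).elim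
    · have ha' : a ≤ b := by omega
      by_cases hPb : P b
      · obtain ⟨t, h1, h2, h3, h4⟩ := ih a ha' hna hPb
        exact ⟨t, h1, by omega, h3, h4⟩
      · exact ⟨b, ha', by omega, hPb, hp⟩

private lemma adj_inSubtree {r v x y : V} (hnx : ¬ InSubtree G r v x)
    (hy : InSubtree G r v y) (hxy : G.Adj x y) : y = v := by
  classical
  rw [InSubtree] at hnx
  push_neg at hnx
  obtain ⟨p, hp⟩ := hnx
  by_cases hmem : y ∈ p.1.support
  · have := hy ⟨p.1.takeUntil y hmem, p.2.takeUntil hmem⟩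
    exact absurd (Walk.support_takeUntil_subset _ hmem this) hp
  · have hq : (p.1.concat hxy).IsPath := by
      rw [← Walk.isPath_reverse_iff, Walk.reverse_concat]
      exact p.2.reverse.cons (by simpa [Walk.support_reverse] using hmem)
    have hmem2 := hy ⟨p.1.concat hxy, hq⟩
    rw [Walk.support_concat] at hmem2
    simp only [List.concat_eq_append, List.mem_append, List.mem_singleton] at hmem2
    rcases hmem2 with h | h
    · exact absurd h hp
    · exact h.symm

private lemma parent_unique (hG : G.IsTree) {r v x1 x2 : V}
    (h1 : ¬ InSubtree G r v x1) (h2 : ¬ InSubtree G r v x2)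
    (a1 : G.Adj x1 v) (a2 : G.Adj x2 v) : x1 = x2 := by
  rw [InSubtree] at h1 h2
  push_neg at h1 h2
  obtain ⟨p1, hp1⟩ := h1
  obtain ⟨p2, hp2⟩ := h2
  have hq1 : (p1.1.concat a1).IsPath := by
    rw [← Walk.isPath_reverse_iff, Walk.reverse_concat]
    exact p1.2.reverse.cons (by simpa [Walk.support_reverse] using hp1)
  have hq2 : (p2.1.concat a2).IsPath := by
    rw [← Walk.isPath_reverse_iff, Walk.reverse_concat]
    exact p2.2.reverse.cons (by simpa [Walk.support_reverse] using hp2)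
  have hval : p1.1.concat a1 = p2.1.concat a2 :=
    congrArg Subtype.val (hG.IsAcyclic.path_unique ⟨_, hq1⟩ ⟨_, hq2⟩)
  have hlen : p1.1.length = p2.1.length := by
    have := congrArg Walk.length hval
    simpa [Walk.length_concat] using this
  have gx : ∀ {x : V} (p : G.Walk r x) (h : G.Adj x v),
      (p.concat h).getVert p.length = x := by
    intro x p h
    rw [Walk.concat_eq_append, Walk.getVert_append]
    simp
  calc x1 = (p1.1.concat a1).getVert p1.1.length := (gx _ _).symm
    _ = (p2.1.concat a2).getVert p1.1.length := by rw [hval]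
    _ = x2 := by rw [hlen]; exact gx _ _

end Aux

/-- In every cost-optimal exploration strategy of an edge-weighted tree, for every
walk and every vertex `v ≠ r`, the positions at which the walk occupies a vertex of
the subtree `T_v` are consecutive: once a walk leaves a subtree it never returns. -/
theorem walk_never_returns_to_subtree {V : Type*} [Fintype V]
    (G : SimpleGraph V) (hG : G.IsTree) (hcard : 1 < Fintype.card V)
    (r : V) (w : Sym2 V → ℝ) (hw : ∀ e ∈ G.edgeSet, 0 < w e)
    (q : ℝ) (hq : 0 ≤ q)
    (S : ExplStrategy G r) (hS : IsOptimal w q S)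
    (v : V) (hv : v ≠ r) (a : Fin S.k) :
    ∀ i j m : ℕ, i ≤ j → j ≤ m → m < (S.walks a).support.length →
      InSubtree G r v ((S.walks a).support.getD i r) →
      InSubtree G r v ((S.walks a).support.getD m r) →
      InSubtree G r v ((S.walks a).support.getD j r) := by
  intro i j m hij hjm hm hPi hPm
  by_contra hPj
  have hsl : (S.walks a).support.length = (S.walks a).length + 1 :=
    Walk.length_support _
  have hgd : ∀ t, t < (S.walks a).support.length →
      (S.walks a).support.getD t r = (S.walks a).getVert t := by
    intro t ht
    exact getD_support_eq_getVert _ _ t (by omega)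
  -- the walk is outside the subtree at position 0 (it is at r)
  have hroot : ¬ InSubtree G r v r := by
    intro h
    have := h ⟨Walk.nil, Walk.IsPath.nil⟩
    simp only [Walk.support_nil, List.mem_singleton] at this
    exact hv this
  have hmlt : 0 < (S.walks a).support.length := by omega
  have hP0 : ¬ InSubtree G r v ((S.walks a).support.getD 0 r) := by
    rw [hgd 0 hmlt, Walk.getVert_zero]
    exact hroot
  -- find the two entering transitions
  obtain ⟨t1, -, ht1i, ht1n, ht1p⟩ :=
    exists_transition (fun t => InSubtree G r v ((S.walks a).support.getD t r))
      i 0 (Nat.zero_le _) hP0 hPi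
  obtain ⟨t3, hjt3, ht3m, ht3n, ht3p⟩ :=
    exists_transition (fun t => InSubtree G r v ((S.walks a).support.getD t r))
      m j hjm hPj hPm
  have ht1len : t1 < (S.walks a).length := by omega
  have ht3len : t3 < (S.walks a).length := by omega
  rw [hgd t1 (by omega)] at ht1n
  rw [hgd (t1+1) (by omega)] at ht1p
  rw [hgd t3 (by omega)] at ht3n
  rw [hgd (t3+1) (by omega)] at ht3p
  have had1 : G.Adj ((S.walks a).getVert t1) ((S.walks a).getVert (t1+1)) :=
    (S.walks a).adj_getVert_succ ht1len
  have had3 : G.Adj ((S.walks a).getVert t3) ((S.walks a).getVert (t3+1)) :=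
    (S.walks a).adj_getVert_succ ht3len
  have hy1 : (S.walks a).getVert (t1+1) = v := adj_inSubtree ht1n ht1p had1
  have hy3 : (S.walks a).getVert (t3+1) = v := adj_inSubtree ht3n ht3p had3
  have hx : (S.walks a).getVert t1 = (S.walks a).getVert t3 :=
    parent_unique hG ht1n ht3n (hy1 ▸ had1) (hy3 ▸ had3)
  have hvv : (S.walks a).getVert (t1+1) = (S.walks a).getVert (t3+1) :=
    hy1.trans hy3.symm
  obtain ⟨W', hsup, hlt⟩ :=
    walk_surgery w hw (S.walks a) t1 t3 (by omega) ht3len hx hvv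
  classical
  -- build the cheaper strategy
  let S' : ExplStrategy G r :=
    { k := S.k, kpos := S.kpos, ends := S.ends,
      walks := Function.update S.walks a W',
      covers := by
        intro z
        obtain ⟨i', hi'⟩ := S.covers z
        by_cases h : i' = a
        · subst h
          exact ⟨i', by rw [Function.update_self]; exact hsup z hi'⟩
        · exact ⟨i', by rwa [Function.update_of_ne h]⟩ }
  have hfun : (fun i' => walkWeight w (Function.update S.walks a W' i')) =
      Function.update (fun i' => walkWeight w (S.walks i')) a (walkWeight w W') := by
    funext i'
    by_cases h : i' = a
    · subst h; simp
    · simp [Function.update_of_ne h]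
  have e1 : ∑ i', walkWeight w (Function.update S.walks a W' i') =
      walkWeight w W' + ∑ i' ∈ Finset.univ \ {a}, walkWeight w (S.walks i') := by
    rw [hfun, Finset.sum_update_of_mem (Finset.mem_univ a)]
  have e2 : ∑ i', walkWeight w (S.walks i') =
      walkWeight w (S.walks a) + ∑ i' ∈ Finset.univ \ {a}, walkWeight w (S.walks i') := by
    rw [Finset.sdiff_singleton_eq_erase]
    exact (Finset.add_sum_erase _ _ (Finset.mem_univ a)).symm
  have hcost : stratCost w q S' < stratCost w q S := by
    have hc1 : stratCost w q S' = (S.k : ℝ) * q +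
        ∑ i', walkWeight w (Function.update S.walks a W' i') := rfl
    have hc2 : stratCost w q S = (S.k : ℝ) * q +
        ∑ i', walkWeight w (S.walks i') := rfl
    rw [hc1, hc2, e1, e2]
    linarith
  exact absurd (hS S') (not_le.mpr hcost)
end

section
/- Let T be a finite edge-weighted tree rooted at the homebase r, with invoking cost q ≥ 0, and let S be a cost-optimal exploration strategy for T. Then no walk of S contains three consecutive vertices x, v, x where v is an internal vertex, i.e., a vertex different from r having exactly one child; in other words, an agent occupying an internal vertex never returns to its previously occupied vertex in its next move. -/
open SimpleGraph

/-- `v` is an internal vertex of the tree `G` rooted at `r`: different from the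
root and with exactly one child. -/
def IsInternal {V : Type*} (G : SimpleGraph V) (r v : V) : Prop :=
  v ≠ r ∧ ∃! u, IsTChild G r v u

private lemma rni_supp_getD {V : Type*} {G : SimpleGraph V} (r : V) :
    ∀ {a b : V} (p : G.Walk a b) (n : ℕ), n ≤ p.length →
    p.support.getD n r = p.getVert n := by
  intro a b p
  induction p with
  | nil =>
    intro n hn
    have hn0 : n = 0 := by simpa using hn
    subst hn0
    simp [Walk.support_nil]
  | cons h q ih =>
    intro n hn
    cases n with
    | zero => simp [Walk.support_cons]
    | succ m =>
      rw [Walk.support_cons]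
      simp only [List.getD_cons_succ, Walk.getVert_cons_succ]
      exact ih m (by simpa using hn)

private lemma rni_splice {V : Type*} {G : SimpleGraph V} (w : Sym2 V → ℝ) :
    ∀ (i : ℕ) {a b : V} (p : G.Walk a b),
    i + 2 ≤ p.length → p.getVert i = p.getVert (i + 2) →
    ∃ p' : G.Walk a b,
      p'.support = p.support.take (i + 1) ++ p.support.drop (i + 3) ∧
      walkWeight w p' = walkWeight w p - 2 * w s(p.getVert i, p.getVert (i + 1)) := by
  intro i
  induction i with
  | zero =>
    intro a b p hl hv
    cases p with
    | nil => simp at hl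
    | cons h1 q =>
      cases q with
      | nil => simp at hl
      | cons h2 q2 =>
        rename_i c d
        simp only [Walk.getVert_zero, Walk.getVert_cons_succ] at hv
        have had : a = d := by simpa using hv
        refine ⟨q2.copy had.symm rfl, ?_, ?_⟩
        · rw [Walk.support_copy]
          have : q2.support = d :: q2.support.tail := (q2.support_eq_cons)
          simp only [Walk.support_cons, List.take_succ_cons, List.take_zero, List.drop_succ_cons,
            List.drop_zero]
          rw [this]
          simp [had]
        · simp only [walkWeight, Walk.edges_copy, Walk.edges_cons, List.map_cons, List.sum_cons]
          have h1' : (Walk.cons h1 (Walk.cons h2 q2)).getVert 0 = a := by simp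
          have h2' : (Walk.cons h1 (Walk.cons h2 q2)).getVert 1 = c := rfl
          rw [h1', h2']
          have : s(c, d) = s(a, c) := by rw [← had]; exact Sym2.eq_swap
          rw [this]; ring
  | succ i ih =>
    intro a b p hl hv
    cases p with
    | nil => simp at hl
    | cons h1 q =>
      rename_i c
      simp only [Walk.getVert_cons_succ] at hv
      have hl' : i + 2 ≤ q.length := by simpa [Walk.length_cons] using hl
      obtain ⟨q', hs, hw⟩ := ih q hl' hv
      refine ⟨Walk.cons h1 q', ?_, ?_⟩
      · simp only [Walk.support_cons, hs, List.take_succ_cons, List.drop_succ_cons]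
        rfl
      · simp only [walkWeight, Walk.edges_cons, List.map_cons, List.sum_cons] at hw ⊢
        rw [hw]; simp only [Walk.getVert_cons_succ]; ring

/-- In a cost-optimal exploration strategy of an edge-weighted tree, no walk contains
three consecutive vertices `x, v, x` with `v` an internal vertex: an agent occupying
an internal vertex never immediately returns to its previously occupied vertex. -/
theorem no_immediate_return_at_internal {V : Type*} [Fintype V]
    (G : SimpleGraph V) (hG : G.IsTree)
    (r : V) (w : Sym2 V → ℝ) (hw : ∀ e ∈ G.edgeSet, 0 < w e)
    (q : ℝ) (hq : 0 ≤ q)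
    (S : ExplStrategy G r) (hS : IsOptimal w q S) :
    ∀ (a : Fin S.k) (i : ℕ), i + 2 < (S.walks a).support.length →
      IsInternal G r ((S.walks a).support.getD (i + 1) r) →
      (S.walks a).support.getD i r ≠ (S.walks a).support.getD (i + 2) r := by
  classical
  intro a i hi hint heq
  set p := S.walks a with hp
  have hslen : p.support.length = p.length + 1 := p.length_support
  have hlen : i + 2 ≤ p.length := by omega
  have hgi : p.support.getD i r = p.getVert i := rni_supp_getD r p i (by omega)
  have hgi1 : p.support.getD (i+1) r = p.getVert (i+1) := rni_supp_getD r p (i+1) (by omega)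
  have hgi2 : p.support.getD (i+2) r = p.getVert (i+2) := rni_supp_getD r p (i+2) hlen
  rw [hgi, hgi2] at heq
  rw [hgi1] at hint
  set x := p.getVert i with hxdef
  set v := p.getVert (i+1) with hvdef
  obtain ⟨hvr, u, ⟨hadj, hsub⟩, -⟩ := hint
  obtain ⟨p', hps, hpw⟩ := rni_splice w i p hlen heq
  -- decomposition of the support
  have e1 : p.support[i+1]'(by omega) = v := by
    rw [← List.getD_eq_getElem p.support r (by omega)]; exact hgi1
  have e2 : p.support[i+2]'(by omega) = x := by
    rw [← List.getD_eq_getElem p.support r (by omega), hgi2]; exact heq.symm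
  have hdec : p.support = p.support.take (i+1) ++ v :: x :: p.support.drop (i+3) := by
    have h1 : p.support.drop (i+1) = v :: x :: p.support.drop (i+3) := by
      rw [List.drop_eq_getElem_cons (show i+1 < p.support.length by omega), e1,
          List.drop_eq_getElem_cons (show i+2 < p.support.length by omega), e2]
    conv_lhs => rw [← List.take_append_drop (i+1) p.support]
    rw [h1]
  have hxmem : x ∈ p.support.take (i+1) := by
    have hl1 : i < (p.support.take (i+1)).length := by
      rw [List.length_take]; omega
    have hx1 : (p.support.take (i+1))[i]'hl1 = x := by
      rw [List.getElem_take, ← List.getD_eq_getElem p.support r (by omega)]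
      exact hgi
    exact hx1 ▸ List.getElem_mem hl1
  have memNew : ∀ z ∈ p.support, z ≠ v → z ∈ p'.support := by
    intro z hz hzv
    rw [hdec] at hz
    rw [hps]
    rcases List.mem_append.mp hz with h | h
    · exact List.mem_append.mpr (Or.inl h)
    · simp only [List.mem_cons] at h
      rcases h with rfl | rfl | h
      · exact absurd rfl hzv
      · exact List.mem_append.mpr (Or.inl hxmem)
      · exact List.mem_append.mpr (Or.inr h)
  -- every walk from r visiting u visits v
  have L : ∀ {t : V} (Wk : G.Walk r t), u ∈ Wk.support → v ∈ Wk.support := by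
    intro t Wk hu
    have h1 : v ∈ ((Wk.takeUntil u hu).toPath : G.Walk r u).support := hsub _
    exact Wk.support_takeUntil_subset hu ((Wk.takeUntil u hu).support_toPath_subset h1)
  -- the new family of walks
  set W' : (j : Fin S.k) → G.Walk r (S.ends j) := Function.update S.walks a p' with hWdef
  have hW'a : W' a = p' := Function.update_self a p' S.walks
  have hW'ne : ∀ j, j ≠ a → W' j = S.walks j := fun j hj => Function.update_of_ne hj _ _
  have hvcov : ∃ j, v ∈ (W' j).support := by
    obtain ⟨c, hc⟩ := S.covers u
    by_cases hca : c = a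
    · subst hca
      have hu' : u ∈ p'.support := memNew u hc hadj.ne'
      exact ⟨c, by rw [hW'a]; exact L p' hu'⟩
    · exact ⟨c, by rw [hW'ne c hca]; exact L (S.walks c) hc⟩
  have covers' : ∀ z, ∃ j, z ∈ (W' j).support := by
    intro z
    obtain ⟨c, hc⟩ := S.covers z
    by_cases hca : c = a
    · subst hca
      by_cases hzv : z = v
      · subst hzv; exact hvcov
      · exact ⟨c, by rw [hW'a]; exact memNew z hc hzv⟩
    · exact ⟨c, by rw [hW'ne c hca]; exact hc⟩
  set S' : ExplStrategy G r := ⟨S.k, S.kpos, S.ends, W', covers'⟩ with hS'def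
  have hF : (fun j => walkWeight w (W' j)) =
      Function.update (fun j => walkWeight w (S.walks j)) a (walkWeight w p') := by
    funext j
    by_cases hj : j = a
    · subst hj; rw [hW'a, Function.update_self]
    · rw [hW'ne j hj, Function.update_of_ne hj]
  have hsum : ∑ j, walkWeight w (W' j) = (∑ j, walkWeight w (S.walks j)) - 2 * w s(x, v) := by
    rw [hF, Finset.sum_update_of_mem (Finset.mem_univ a), hpw]
    have h2 : ∑ j, walkWeight w (S.walks j) =
        walkWeight w p + ∑ j ∈ Finset.univ.erase a, walkWeight w (S.walks j) :=
      (Finset.add_sum_erase _ _ (Finset.mem_univ a)).symm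
    rw [h2, Finset.sdiff_singleton_eq_erase]; ring
  have hedge : s(x, v) ∈ G.edgeSet := G.mem_edgeSet.mpr (p.adj_getVert_succ (by omega))
  have hwe : 0 < w s(x, v) := hw _ hedge
  have hlt : stratCost w q S' < stratCost w q S := by
    simp only [stratCost, hS'def]
    rw [hsum]
    linarith
  exact absurd (hS S') (not_le.mpr hlt)
end

section
/- Let T be a finite edge-weighted tree with at least two vertices, rooted at the homebase r, with invoking cost q ≥ 0, and assume every vertex of T other than r and the leaves has at least two children. Define the labeling k recursively by: k(v) = 1 for every leaf v; and for a non-leaf vertex v with children u_1, …, u_m, k(v) = max{1, Σ_{j=1}^m κ(u_j)}, where κ(u_j) = k(u_j) − 1 if k(u_j) = 1 and d(v, f(u_j)) ≤ d(r, v) + q (f(u_j) being a leaf of T_{u_j} at maximum distance from u_j), and κ(u_j) = k(u_j) otherwise. Then for every vertex v of T, every cost-optimal exploration strategy for T contains at least k(v) walks that visit at least one vertex of the subtree T_v. -/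
open SimpleGraph

open scoped Classical in
/-- The set of children of `v` in the tree `G` rooted at `r`, as a finset. -/
noncomputable def childrenFinset {V : Type*} [Fintype V] (G : SimpleGraph V)
    (r v : V) : Finset V :=
  Finset.univ.filter (fun u => IsTChild G r v u)

namespace Expl

variable {V : Type*} {G : SimpleGraph V} {w : Sym2 V → ℝ}

@[simp] lemma walkWeight_nil {a : V} : walkWeight w (SimpleGraph.Walk.nil (u := a) (G := G)) = 0 := rfl

@[simp] lemma walkWeight_cons {a b c : V} (h : G.Adj a b) (p : G.Walk b c) :
    walkWeight w (SimpleGraph.Walk.cons h p) = w s(a, b) + walkWeight w p := by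
  simp [walkWeight]

@[simp] lemma walkWeight_append {a b c : V} (p : G.Walk a b) (q : G.Walk b c) :
    walkWeight w (p.append q) = walkWeight w p + walkWeight w q := by
  simp [walkWeight, SimpleGraph.Walk.edges_append]

@[simp] lemma walkWeight_concat {a b c : V} (p : G.Walk a b) (h : G.Adj b c) :
    walkWeight w (p.concat h) = walkWeight w p + w s(b, c) := by
  simp [SimpleGraph.Walk.concat_eq_append]

variable (hw0 : ∀ e ∈ G.edgeSet, 0 ≤ w e)
include hw0

lemma walkWeight_nonneg {a b : V} (p : G.Walk a b) : 0 ≤ walkWeight w p := by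
  apply List.sum_nonneg
  intro x hx
  obtain ⟨e, he, rfl⟩ := List.mem_map.mp hx
  exact hw0 e (p.edges_subset_edgeSet he)

lemma wdist_bddBelow (a b : V) : BddBelow {c : ℝ | ∃ p : G.Walk a b, walkWeight w p = c} := by
  refine ⟨0, ?_⟩
  rintro x ⟨p, rfl⟩
  exact walkWeight_nonneg hw0 p

lemma wdist_le {a b : V} (p : G.Walk a b) : wdist G w a b ≤ walkWeight w p :=
  csInf_le (wdist_bddBelow hw0 a b) ⟨p, rfl⟩

lemma wdist_nonneg (a b : V) (hab : G.Reachable a b) : 0 ≤ wdist G w a b := by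
  apply le_csInf
  · obtain ⟨p⟩ := hab
    exact ⟨walkWeight w p, p, rfl⟩
  · rintro x ⟨p, rfl⟩
    exact walkWeight_nonneg hw0 p

@[simp] lemma wdist_self (a : V) : wdist G w a a = 0 := by
  refine le_antisymm ?_ (wdist_nonneg hw0 a a (by rfl))
  simpa using wdist_le hw0 (SimpleGraph.Walk.nil (u := a) (G := G))

/-- Downward triangle step across an edge. -/
lemma wdist_le_edge_add {c d y : V} (h : G.Adj c d) (hr : G.Reachable d y) :
    wdist G w c y ≤ w s(c, d) + wdist G w d y := by
  have : wdist G w c y - w s(c, d) ≤ wdist G w d y := by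
    apply le_csInf
    · obtain ⟨p⟩ := hr
      exact ⟨walkWeight w p, p, rfl⟩
    · rintro x ⟨p, rfl⟩
      have := wdist_le hw0 (SimpleGraph.Walk.cons h p)
      rw [walkWeight_cons] at this
      linarith
  linarith

/-- If every walk from `a` to `b` passes through `c`, distances add up (superadditively). -/
lemma wdist_split_ge {a b c : V} (hsep : ∀ p : G.Walk a b, c ∈ p.support)
    (hab : G.Reachable a b) :
    wdist G w a c + wdist G w c b ≤ wdist G w a b := by
  classical
  apply le_csInf
  · obtain ⟨p⟩ := hab
    exact ⟨walkWeight w p, p, rfl⟩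
  · rintro x ⟨p, rfl⟩
    have hc := hsep p
    have hsplit := p.take_spec hc
    calc wdist G w a c + wdist G w c b
        ≤ walkWeight w (p.takeUntil c hc) + walkWeight w (p.dropUntil c hc) :=
          add_le_add (wdist_le hw0 _) (wdist_le hw0 _)
      _ = walkWeight w ((p.takeUntil c hc).append (p.dropUntil c hc)) := (walkWeight_append _ _).symm
      _ = walkWeight w p := by rw [hsplit]

omit hw0 in
lemma exists_walk_lt (a b : V) (hab : G.Reachable a b) {ε : ℝ} (hε : 0 < ε) :
    ∃ p : G.Walk a b, walkWeight w p < wdist G w a b + ε := by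
  obtain ⟨p⟩ := hab
  obtain ⟨x, ⟨p', rfl⟩, hlt⟩ := Real.lt_sInf_add_pos (s := {c : ℝ | ∃ p : G.Walk a b, walkWeight w p = c}) ⟨walkWeight w p, p, rfl⟩ hε
  exact ⟨p', hlt⟩

end Expl


namespace Expl

variable {V : Type*} {G : SimpleGraph V}

lemma walk_eq_of_isPath (hG : G.IsTree) {a b : V} {p q : G.Walk a b}
    (hp : p.IsPath) (hq : q.IsPath) : p = q :=
  congrArg Subtype.val (hG.IsAcyclic.path_unique ⟨p, hp⟩ ⟨q, hq⟩)

open scoped Classical in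
/-- A chosen path between two vertices of a tree. -/
noncomputable def pth (hG : G.IsTree) (a b : V) : G.Path a b :=
  (Classical.choice (hG.isConnected.preconnected a b : G.Reachable a b)).toPath

lemma path_eq_pth (hG : G.IsTree) {a b : V} (p : G.Path a b) : p = pth hG a b :=
  hG.IsAcyclic.path_unique _ _

lemma walk_eq_pth (hG : G.IsTree) {a b : V} (p : G.Walk a b) (hp : p.IsPath) :
    p = (pth hG a b).1 :=
  walk_eq_of_isPath hG hp (pth hG a b).2

lemma inSubtree_iff (hG : G.IsTree) {r v u : V} :
    InSubtree G r v u ↔ v ∈ (pth hG r u).1.support := by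
  constructor
  · intro h; exact h _
  · intro h p; rw [path_eq_pth hG p]; exact h

lemma mem_walk_of_forall_path {a b c : V} (h : ∀ p : G.Path a b, c ∈ p.1.support)
    (W : G.Walk a b) : c ∈ W.support := by
  classical
  exact W.support_toPath_subset (h W.toPath)

lemma inSubtree_mem_walk {r v u : V} (h : InSubtree G r v u) (W : G.Walk r u) :
    v ∈ W.support := mem_walk_of_forall_path h W

lemma inSubtree_refl (r v : V) : InSubtree G r v v := fun p => p.1.end_mem_support

lemma inSubtree_root (r u : V) : InSubtree G r r u := fun p => p.1.start_mem_support

/-- Key structural lemma: if `z` appears in the part of the path after `x`,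
then `x` lies on every path from the start to `z`. -/
lemma mem_path_of_mem_dropUntil [DecidableEq V] {a b x z : V} {p : G.Walk a b}
    (hG : G.IsTree) (hp : p.IsPath) (hx : x ∈ p.support)
    (hz : z ∈ (p.dropUntil x hx).support) (q : G.Path a z) : x ∈ q.1.support := by
  set s := p.takeUntil x hx with hs
  set t := p.dropUntil x hx with ht
  set t₁ := t.takeUntil z hz with ht₁
  have hQpath : (s.append t₁).IsPath := by
    rw [SimpleGraph.Walk.isPath_def]
    have hnodup : p.support.Nodup := hp.support_nodup
    have h1 : p.support = s.support ++ t.support.tail := by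
      conv_lhs => rw [← p.take_spec hx]
      rw [SimpleGraph.Walk.support_append]
    have h2 : t.support = t₁.support ++ (t.dropUntil z hz).support.tail := by
      conv_lhs => rw [← t.take_spec hz]
      rw [SimpleGraph.Walk.support_append]
    have h3 : t.support.tail = t₁.support.tail ++ (t.dropUntil z hz).support.tail := by
      have e1 : t.support = x :: t.support.tail := t.support_eq_cons
      have e2 : t₁.support = x :: t₁.support.tail := t₁.support_eq_cons
      rw [e1, e2] at h2
      exact (List.cons.injEq _ _ _ _).mp h2 |>.2
    have hsub : (s.append t₁).support.Sublist p.support := by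
      rw [SimpleGraph.Walk.support_append, h1, h3, ← List.append_assoc]
      exact (List.sublist_append_left _ _)
    exact hnodup.sublist hsub
  have : q = ⟨s.append t₁, hQpath⟩ := hG.IsAcyclic.path_unique _ _
  rw [this]
  simp only [SimpleGraph.Walk.mem_support_append_iff]
  left
  exact s.end_mem_support

lemma comparability [DecidableEq V] (hG : G.IsTree) {a b x z : V} {p : G.Walk a b}
    (hp : p.IsPath) (hx : x ∈ p.support) (hz : z ∈ p.support) :
    (∀ q : G.Path a z, x ∈ q.1.support) ∨ (∀ q : G.Path a x, z ∈ q.1.support) := by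
  rw [← p.take_spec hx, SimpleGraph.Walk.mem_support_append_iff] at hz
  rcases hz with hz | hz
  · right
    intro q
    have : q = ⟨p.takeUntil x hx, hp.takeUntil hx⟩ := hG.IsAcyclic.path_unique _ _
    rw [this]; exact hz
  · left
    intro q
    exact mem_path_of_mem_dropUntil hG hp hx hz q

end Expl

namespace Part3b
variable {V : Type*} {G : SimpleGraph V}

lemma inSubtree_trans {r v u x : V} (hvu : InSubtree G r v u) (hux : InSubtree G r u x) :
    InSubtree G r v x := by
  classical
  intro p
  have hu : u ∈ p.1.support := hux p
  have : v ∈ (p.1.takeUntil u hu).support := hvu ⟨p.1.takeUntil u hu, p.2.takeUntil hu⟩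
  exact p.1.support_takeUntil_subset hu this

lemma inSubtree_antisymm (hG : G.IsTree) {r a b : V}
    (hab : InSubtree G r a b) (hba : InSubtree G r b a) : a = b := by
  classical
  set p := Expl.pth hG r a with hp
  have hb : b ∈ p.1.support := hba p
  have h1 : (Expl.pth hG r b).1 = p.1.takeUntil b hb :=
    Expl.walk_eq_of_isPath hG (Expl.pth hG r b).2 (p.2.takeUntil hb)
  have ha' : a ∈ (Expl.pth hG r b).1.support := hab _
  have h2 : p.1 = (Expl.pth hG r b).1.takeUntil a ha' :=
    Expl.walk_eq_of_isPath hG p.2 ((Expl.pth hG r b).2.takeUntil ha')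
  have l1 := congrArg SimpleGraph.Walk.length (p.1.take_spec hb)
  have l2 := congrArg SimpleGraph.Walk.length ((Expl.pth hG r b).1.take_spec ha')
  rw [SimpleGraph.Walk.length_append] at l1 l2
  rw [← h1] at l1
  rw [← h2] at l2
  have hz : (p.1.dropUntil b hb).length = 0 := by omega
  cases hd : p.1.dropUntil b hb with
  | nil => rfl
  | cons h q => rw [hd] at hz; simp at hz

lemma child_ne_root {r v u : V} (h : IsTChild G r v u) : u ≠ r := by
  intro h0
  subst h0
  have := h.2 ⟨SimpleGraph.Walk.nil, SimpleGraph.Walk.IsPath.nil⟩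
  simp only [SimpleGraph.Walk.support_nil, List.mem_singleton] at this
  subst this
  exact G.loopless.irrefl _ h.1

lemma child_path_structure (hG : G.IsTree) {r v u : V} (h : IsTChild G r v u) :
    (Expl.pth hG r u).1 = (Expl.pth hG r v).1.concat h.1 := by
  classical
  have hnm : u ∉ (Expl.pth hG r v).1.support := by
    intro hu
    have : InSubtree G r u v := (Expl.inSubtree_iff hG).mpr hu
    exact G.loopless.irrefl v (inSubtree_antisymm hG this h.2 ▸ h.1)
  have hpath : ((Expl.pth hG r v).1.concat h.1).IsPath := by
    rw [SimpleGraph.Walk.isPath_def, SimpleGraph.Walk.support_concat]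
    rw [List.nodup_append]
    refine ⟨(Expl.pth hG r v).2.support_nodup, List.nodup_singleton _, ?_⟩
    intro a ha b hb hab
    rw [List.mem_singleton] at hb
    rw [hab, hb] at ha
    exact hnm ha
  exact (Expl.walk_eq_of_isPath hG (Expl.pth hG r u).2 hpath)

lemma subtree_child_unique (hG : G.IsTree) {r v u u' x : V}
    (hu : IsTChild G r v u) (hu' : IsTChild G r v u')
    (hx : InSubtree G r u x) (hx' : InSubtree G r u' x) : u = u' := by
  classical
  have key : ∀ {c c' : V}, IsTChild G r v c → IsTChild G r v c' →
      (∀ q : G.Path r c', c ∈ q.1.support) → c = c' := by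
    intro c c' hc hc' hmem
    have := hmem (Expl.pth hG r c')
    rw [child_path_structure hG hc', SimpleGraph.Walk.support_concat,
      List.mem_append, List.mem_singleton] at this
    rcases this with hmem' | rfl
    · have : InSubtree G r c v := (Expl.inSubtree_iff hG).mpr hmem'
      exact absurd (inSubtree_antisymm hG this hc.2) (G.ne_of_adj hc.1).symm
    · rfl
  set p := Expl.pth hG r x with hp
  have h1 : u ∈ p.1.support := hx p
  have h2 : u' ∈ p.1.support := hx' p
  rcases Expl.comparability hG p.2 h2 h1 with hc | hc
  · exact (key hu' hu fun q => hc q).symm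
  · exact key hu hu' fun q => hc q

lemma exists_child (hG : G.IsTree) {r v x : V} (hx : InSubtree G r v x) (hne : x ≠ v) :
    ∃ u, IsTChild G r v u ∧ InSubtree G r u x := by
  classical
  set p := Expl.pth hG r x with hp
  have hv : v ∈ p.1.support := hx p
  have hDpath : (p.1.dropUntil v hv).IsPath := p.2.dropUntil hv
  cases hD : p.1.dropUntil v hv with
  | nil => exact absurd rfl hne
  | cons hadj C =>
    rename_i u
    have huD : u ∈ (p.1.dropUntil v hv).support := by
      rw [hD, SimpleGraph.Walk.support_cons]
      exact List.mem_cons_of_mem _ C.start_mem_support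
    refine ⟨u, ⟨hadj, ?_⟩, ?_⟩
    · intro q
      exact Expl.mem_path_of_mem_dropUntil hG p.2 hv huD q
    · rw [Expl.inSubtree_iff hG, ← hp]
      exact p.1.support_dropUntil_subset hv huD

lemma subtree_step (hG : G.IsTree) {r v u ℓ z : V} (hu : IsTChild G r v u)
    (hℓ : InSubtree G r u ℓ) (hz : z ∈ (Expl.pth hG v ℓ).1.support) (hzv : z ≠ v) :
    InSubtree G r u z := by
  classical
  set p := Expl.pth hG r ℓ with hp
  have hvℓ : InSubtree G r v ℓ := inSubtree_trans hu.2 hℓ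
  have hv : v ∈ p.1.support := hvℓ p
  have hpv : (Expl.pth hG v ℓ).1 = p.1.dropUntil v hv :=
    Expl.walk_eq_of_isPath hG (Expl.pth hG v ℓ).2 (p.2.dropUntil hv)
  rw [hpv] at hz
  have hvz : InSubtree G r v z := fun q => Expl.mem_path_of_mem_dropUntil hG p.2 hv hz q
  have huℓ : u ∈ p.1.support := hℓ p
  have hzp : z ∈ p.1.support := p.1.support_dropUntil_subset hv hz
  rcases Expl.comparability hG p.2 huℓ hzp with hc | hc
  · exact fun q => hc q
  · have := hc (Expl.pth hG r u)
    rw [child_path_structure hG hu, SimpleGraph.Walk.support_concat,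
      List.mem_append, List.mem_singleton] at this
    rcases this with hmem' | rfl
    · have : InSubtree G r z v := (Expl.inSubtree_iff hG).mpr hmem'
      exact absurd (inSubtree_antisymm hG hvz this).symm hzv
    · exact Expl.inSubtree_refl r z

lemma between_of_children (hG : G.IsTree) {r v u u' ℓ ℓ' : V}
    (hu : IsTChild G r v u) (hu' : IsTChild G r v u') (huu' : u ≠ u')
    (hℓ : InSubtree G r u ℓ) (hℓ' : InSubtree G r u' ℓ') :
    ∀ p : G.Path ℓ ℓ', v ∈ p.1.support := by
  classical
  set pv := Expl.pth hG v ℓ with hpv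
  set pv' := Expl.pth hG v ℓ' with hpv'
  have hdisj : ∀ z, z ∈ pv.1.support → z ∈ pv'.1.support → z = v := by
    intro z h1 h2
    by_contra hzv
    exact huu' (subtree_child_unique hG hu hu'
      (subtree_step hG hu hℓ h1 hzv) (subtree_step hG hu' hℓ' h2 hzv))
  have hQ : (pv.1.reverse.append pv'.1).IsPath := by
    rw [SimpleGraph.Walk.isPath_def, SimpleGraph.Walk.support_append, List.nodup_append]
    refine ⟨pv.2.reverse.support_nodup, pv'.2.support_nodup.tail, ?_⟩
    intro z hz z' hz' hzz'
    rw [← hzz'] at hz'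
    have hz1 : z ∈ pv.1.support := by
      rwa [SimpleGraph.Walk.support_reverse, List.mem_reverse] at hz
    have hz2 : z ∈ pv'.1.support := List.mem_of_mem_tail hz'
    have : z = v := hdisj z hz1 hz2
    subst this
    have : pv'.1.support = z :: pv'.1.support.tail := pv'.1.support_eq_cons
    have hnodup := pv'.2.support_nodup
    rw [this] at hnodup
    exact (List.nodup_cons.mp hnodup).1 hz'
  intro p
  have : p = ⟨pv.1.reverse.append pv'.1, hQ⟩ := hG.IsAcyclic.path_unique _ _
  rw [this]
  rw [SimpleGraph.Walk.mem_support_append_iff]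
  left
  rw [SimpleGraph.Walk.support_reverse, List.mem_reverse]
  exact pv.1.start_mem_support

end Part3b

namespace Part4
open Expl
variable {V : Type*} {G : SimpleGraph V} {w : Sym2 V → ℝ}

lemma key_reroute (hG : G.IsTree) (hw0 : ∀ e ∈ G.edgeSet, 0 ≤ w e) :
    ∀ (n : ℕ) (c y : V) (E : G.Walk c c), E.length ≤ n → y ∈ E.support →
    ∃ F : G.Walk c y, (∀ z ∈ E.support, z ∈ F.support) ∧
      walkWeight w F + wdist G w c y ≤ walkWeight w E := by
  classical
  have hR : ∀ a b : V, G.Reachable a b := fun a b => hG.isConnected.preconnected a b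
  intro n
  induction n with
  | zero =>
    intro c y E hlen hy
    cases E with
    | nil =>
      simp only [SimpleGraph.Walk.support_nil, List.mem_singleton] at hy
      subst hy
      exact ⟨SimpleGraph.Walk.nil, by simp, by simp [wdist_self hw0]⟩
    | cons hcd B => simp [SimpleGraph.Walk.length_cons] at hlen
  | succ n IH =>
    intro c y E hlen hy
    cases E with
    | nil =>
      simp only [SimpleGraph.Walk.support_nil, List.mem_singleton] at hy
      subst hy
      exact ⟨SimpleGraph.Walk.nil, by simp, by simp [wdist_self hw0]⟩
    | cons hcd B =>
      rename_i d
      by_cases hyc : y = c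
      · subst hyc
        refine ⟨SimpleGraph.Walk.cons hcd B, fun z hz => hz, by simp [wdist_self hw0]⟩
      -- decompose B at its first return to c
      have hc : c ∈ B.support := B.end_mem_support
      set B₁ := B.takeUntil c hc with hB₁def
      set E'' := B.dropUntil c hc with hE''def
      have hBspec : B₁.append E'' = B := B.take_spec hc
      -- B₁ ends with the edge (d', c) where d' = d by the tree property
      cases hrev : B₁.reverse with
      | nil =>
        exfalso
        have : B₁.length = 0 := by
          have := congrArg SimpleGraph.Walk.length hrev
          rwa [SimpleGraph.Walk.length_reverse] at this
        cases hB : B₁ with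
        | nil => exact G.loopless.irrefl _ hcd
        | cons h q => rw [hB] at this; simp at this
      | cons hce R =>
        rename_i e
        have hB₁ : B₁ = R.reverse.concat hce.symm := by
          have : B₁.reverse.reverse = (SimpleGraph.Walk.cons hce R).reverse :=
            congrArg SimpleGraph.Walk.reverse hrev
          rwa [SimpleGraph.Walk.reverse_reverse, SimpleGraph.Walk.reverse_cons] at this
        set A := R.reverse with hAdef
        have hcount : B₁.support.count c = 1 := B.count_support_takeUntil_eq_one hc
        have hsuppB₁ : B₁.support = A.support ++ [c] := by
          rw [hB₁, SimpleGraph.Walk.support_concat]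
        have hcA : c ∉ A.support := by
          rw [hsuppB₁, List.count_append] at hcount
          simp at hcount
          exact List.count_eq_zero.mp (by omega)
        -- tree: e = d
        have hde : d = e := by
          have hcP : c ∉ (A.toPath : G.Walk d e).support :=
            fun h => hcA (A.support_toPath_subset h)
          have hQ : (SimpleGraph.Walk.cons hcd (A.toPath : G.Walk d e)).IsPath := by
            rw [SimpleGraph.Walk.isPath_def, SimpleGraph.Walk.support_cons]
            exact List.nodup_cons.mpr ⟨hcP, (A.toPath).2.support_nodup⟩
          have heq := Expl.walk_eq_of_isPath hG hQ (SimpleGraph.Path.singleton hce).2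
          have hlen1 := congrArg SimpleGraph.Walk.length heq
          simp only [SimpleGraph.Walk.length_cons, SimpleGraph.Path.singleton,
            SimpleGraph.Walk.length_nil] at hlen1
          have hlen0 : (A.toPath : G.Walk d e).length = 0 := by omega
          cases hP : (A.toPath : G.Walk d e) with
          | nil => rfl
          | cons h q => rw [hP] at hlen0; simp at hlen0
        subst hde
        -- now A : G.Walk d d
        have hlenB : B₁.length + E''.length = B.length := by
          have := congrArg SimpleGraph.Walk.length hBspec
          rwa [SimpleGraph.Walk.length_append] at this
        have hlenB₁ : B₁.length = A.length + 1 := by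
          rw [hB₁, SimpleGraph.Walk.length_concat]
        have hlenE : (SimpleGraph.Walk.cons hcd B).length = B.length + 1 :=
          SimpleGraph.Walk.length_cons _ _
        have hA_le : A.length ≤ n := by omega
        have hE''_le : E''.length ≤ n := by omega
        have hwB₁ : walkWeight w B₁ = walkWeight w A + w s(d, c) := by
          rw [hB₁, walkWeight_concat]
        have hedge : w s(d, c) = w s(c, d) := by rw [Sym2.eq_swap]
        -- weight of E
        have hwE : walkWeight w (SimpleGraph.Walk.cons hcd B)
            = w s(c, d) + walkWeight w A + w s(c, d) + walkWeight w E'' := by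
          rw [walkWeight_cons, ← hBspec, walkWeight_append, hwB₁, hedge]
          ring
        -- support of E
        have hsuppE : ∀ z, z ∈ (SimpleGraph.Walk.cons hcd B).support →
            z = c ∨ z ∈ A.support ∨ z ∈ E''.support := by
          intro z hz
          rw [SimpleGraph.Walk.support_cons] at hz
          rcases List.mem_cons.mp hz with rfl | hz
          · exact Or.inl rfl
          · rw [← hBspec, SimpleGraph.Walk.mem_support_append_iff] at hz
            rcases hz with hz | hz
            · rw [hsuppB₁, List.mem_append, List.mem_singleton] at hz
              rcases hz with hz | rfl
              · exact Or.inr (Or.inl hz)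
              · exact Or.inl rfl
            · exact Or.inr (Or.inr hz)
        -- where is y?
        have hy' := hsuppE y hy
        rcases hy' with rfl | hyA | hyE''
        · exact absurd rfl hyc
        · -- y in the inner excursion A
          obtain ⟨FA, hFA_supp, hFA_w⟩ := IH d y A hA_le hyA
          refine ⟨E''.append (SimpleGraph.Walk.cons hcd FA), ?_, ?_⟩
          · intro z hz
            rw [SimpleGraph.Walk.mem_support_append_iff, SimpleGraph.Walk.support_cons]
            rcases hsuppE z hz with rfl | hzA | hzE''
            · exact Or.inr (List.mem_cons_self)
            · exact Or.inr (List.mem_cons_of_mem _ (hFA_supp z hzA))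
            · exact Or.inl hzE''
          · rw [walkWeight_append, walkWeight_cons, hwE]
            have htri : wdist G w c y ≤ w s(c, d) + wdist G w d y :=
              wdist_le_edge_add hw0 hcd (hR d y)
            linarith
        · -- y in the trailing closed walk E''
          obtain ⟨F'', hF''_supp, hF''_w⟩ := IH c y E'' hE''_le hyE''
          refine ⟨(SimpleGraph.Walk.cons hcd (A.concat hce.symm)).append F'', ?_, ?_⟩
          · intro z hz
            rw [SimpleGraph.Walk.mem_support_append_iff, SimpleGraph.Walk.support_cons,
              SimpleGraph.Walk.support_concat]
            rcases hsuppE z hz with rfl | hzA | hzE''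
            · exact Or.inl (List.mem_cons_self)
            · exact Or.inl (List.mem_cons_of_mem _ (by exact List.mem_append_left _ hzA))
            · exact Or.inr (hF''_supp z hzE'')
          · rw [walkWeight_append, walkWeight_cons, walkWeight_concat, hwE, hedge]
            linarith

end Part4

namespace Part5
open Expl Part4

variable {V : Type*} {G : SimpleGraph V} {w : Sym2 V → ℝ} {q : ℝ}

@[simp] lemma walkWeight_copy {a b a' b' : V} (p : G.Walk a b) (h1 : a = a') (h2 : b = b') :
    walkWeight w (p.copy h1 h2) = walkWeight w p := by
  subst h1; subst h2; rfl

lemma no_far_detour (hG : G.IsTree) {r : V} (hw0 : ∀ e ∈ G.edgeSet, 0 ≤ w e) (hq : 0 ≤ q)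
    (S : ExplStrategy G r) (hopt : IsOptimal w q S)
    {i : Fin S.k} {c y : V} (P₁ : G.Walk r c) (E : G.Walk c c) (P₂ : G.Walk c (S.ends i))
    (hdecomp : S.walks i = P₁.append (E.append P₂)) (hy : y ∈ E.support) :
    wdist G w c y ≤ wdist G w r c + q := by
  classical
  by_contra hfar
  push_neg at hfar
  have hR : ∀ a b : V, G.Reachable a b := fun a b => hG.isConnected.preconnected a b
  set ε := wdist G w c y - (wdist G w r c + q) with hεdef
  have hε : 0 < ε := by simp only [hεdef]; linarith
  obtain ⟨R, hRw⟩ := exists_walk_lt (G := G) (w := w) r c (hR r c) hε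
  obtain ⟨F, hFsupp, hFw⟩ := key_reroute hG hw0 E.length c y E le_rfl hy
  -- modified old walks
  set wj : ∀ j' : Fin S.k, G.Walk r (S.ends j') := fun j' =>
    if h : j' = i then (P₁.append P₂).copy rfl (congrArg S.ends h).symm
    else S.walks j' with hwjdef
  have hwj_i : walkWeight w (wj i) = walkWeight w P₁ + walkWeight w P₂ := by
    simp only [hwjdef, dif_pos rfl]
    rw [walkWeight_copy, walkWeight_append]
  have hwj_ne : ∀ j', j' ≠ i → wj j' = S.walks j' := fun j' h => by
    simp only [hwjdef, dif_neg h]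
  have hwj_i_supp : ∀ z, z ∈ (P₁.append P₂).support → z ∈ (wj i).support := by
    intro z hz
    simp only [hwjdef, dif_pos rfl]
    rwa [SimpleGraph.Walk.support_copy]
  -- the new strategy
  set ends' : Fin (S.k + 1) → V := Fin.snoc S.ends y with hends'
  set walks' : ∀ j : Fin (S.k + 1), G.Walk r (ends' j) :=
    fun j => Fin.lastCases (motive := fun j => G.Walk r (ends' j))
      ((R.append F).copy rfl (by simp [hends']))
      (fun j' => (wj j').copy rfl (by simp [hends'])) j with hwalks'
  have hlast : (walks' (Fin.last S.k)).support = (R.append F).support ∧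
      walkWeight w (walks' (Fin.last S.k)) = walkWeight w (R.append F) := by
    simp only [hwalks', Fin.lastCases_last]
    constructor
    · rw [SimpleGraph.Walk.support_copy]
    · rw [walkWeight_copy]
  have hcast : ∀ j' : Fin S.k, (walks' j'.castSucc).support = (wj j').support ∧
      walkWeight w (walks' j'.castSucc) = walkWeight w (wj j') := by
    intro j'
    simp only [hwalks', Fin.lastCases_castSucc]
    constructor
    · rw [SimpleGraph.Walk.support_copy]
    · rw [walkWeight_copy]
  have hcovers : ∀ v : V, ∃ j, v ∈ (walks' j).support := by
    intro v
    obtain ⟨j, hj⟩ := S.covers v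
    by_cases hji : j = i
    · subst hji
      rw [hdecomp, SimpleGraph.Walk.mem_support_append_iff] at hj
      rcases hj with hj | hj
      · refine ⟨j.castSucc, ?_⟩
        rw [(hcast j).1]
        exact hwj_i_supp v (by rw [SimpleGraph.Walk.mem_support_append_iff]; exact Or.inl hj)
      · rw [SimpleGraph.Walk.mem_support_append_iff] at hj
        rcases hj with hj | hj
        · refine ⟨Fin.last S.k, ?_⟩
          rw [hlast.1, SimpleGraph.Walk.mem_support_append_iff]
          exact Or.inr (hFsupp v hj)
        · refine ⟨j.castSucc, ?_⟩
          rw [(hcast j).1]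
          exact hwj_i_supp v (by rw [SimpleGraph.Walk.mem_support_append_iff]; exact Or.inr hj)
    · refine ⟨j.castSucc, ?_⟩
      rw [(hcast j).1, hwj_ne j hji]
      exact hj
  set S' : ExplStrategy G r := ⟨S.k + 1, Nat.succ_pos _, ends', walks', hcovers⟩ with hS'
  have hle := hopt S'
  -- compute the cost of S'
  have hsum : ∑ j, walkWeight w (S'.walks j)
      = (∑ j', walkWeight w (S.walks j')) - walkWeight w (S.walks i)
        + (walkWeight w P₁ + walkWeight w P₂) + walkWeight w (R.append F) := by
    have h1 : ∑ j, walkWeight w (S'.walks j)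
        = (∑ j' : Fin S.k, walkWeight w (walks' j'.castSucc))
          + walkWeight w (walks' (Fin.last S.k)) := by
      exact Fin.sum_univ_castSucc (f := fun j => walkWeight w (walks' j))
    rw [h1, hlast.2]
    congr 1
    congr 1
    have h2 : ∀ j' : Fin S.k, walkWeight w (walks' j'.castSucc)
        = Function.update (fun j => walkWeight w (S.walks j)) i
            (walkWeight w P₁ + walkWeight w P₂) j' := by
      intro j'
      rw [(hcast j').2, Function.update_apply]
      by_cases hji : j' = i
      · subst hji; rw [if_pos rfl, hwj_i]
      · rw [if_neg hji, hwj_ne j' hji]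
    rw [Finset.sum_congr rfl fun j' _ => h2 j']
    rw [Finset.sum_update_of_mem (Finset.mem_univ i)]
    rw [Finset.sum_sdiff_eq_sub (Finset.singleton_subset_iff.mpr (Finset.mem_univ i))]
    simp
    ring
  have hWi : walkWeight w (S.walks i)
      = walkWeight w P₁ + walkWeight w E + walkWeight w P₂ := by
    rw [hdecomp, walkWeight_append, walkWeight_append]
    ring
  have hcost' : stratCost w q S' = stratCost w q S + q
      + (walkWeight w R + walkWeight w F - walkWeight w E) := by
    simp only [stratCost, hS', hsum, hWi]
    rw [walkWeight_append]
    push_cast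
    ring
  have : stratCost w q S' < stratCost w q S := by
    rw [hcost']
    have := hFw
    have := hRw
    simp only [hεdef] at hRw
    linarith
  linarith

end Part5

namespace Part6
open Expl Part3b

variable {V : Type*} {G : SimpleGraph V} {w : Sym2 V → ℝ} {q : ℝ}

lemma mem_walk_child (hG : G.IsTree) {r v u ℓ : V} (hu : IsTChild G r v u)
    (hℓ : InSubtree G r u ℓ) (Wk : G.Walk v ℓ) : u ∈ Wk.support := by
  classical
  apply mem_walk_of_forall_path _ Wk
  suffices h : u ∈ (pth hG v ℓ).1.support by
    intro p
    rw [hG.IsAcyclic.path_unique p (pth hG v ℓ)]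
    exact h
  set p := pth hG r ℓ with hpdef
  have hvℓ : InSubtree G r v ℓ := inSubtree_trans hu.2 hℓ
  have hv : v ∈ p.1.support := hvℓ p
  have hu' : u ∈ p.1.support := hℓ p
  rw [← p.1.take_spec hv, SimpleGraph.Walk.mem_support_append_iff] at hu'
  have hpv : (pth hG v ℓ).1 = p.1.dropUntil v hv :=
    walk_eq_of_isPath hG (pth hG v ℓ).2 (p.2.dropUntil hv)
  rcases hu' with hu' | hu'
  · exfalso
    have htake : (pth hG r v).1 = p.1.takeUntil v hv :=
      walk_eq_of_isPath hG (pth hG r v).2 (p.2.takeUntil hv)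
    have : InSubtree G r u v := (inSubtree_iff hG).mpr (by rw [htake]; exact hu')
    exact G.loopless.irrefl v (inSubtree_antisymm hG this hu.2 ▸ hu.1)
  · rw [hpv]
    exact hu'

lemma far_propagate (hG : G.IsTree) (hw0 : ∀ e ∈ G.edgeSet, 0 ≤ w e)
    {r v u ℓ : V} (hu : IsTChild G r v u) (hℓ : InSubtree G r u ℓ)
    (hfar : wdist G w r u + q < wdist G w u ℓ) :
    wdist G w r v + q < wdist G w v ℓ := by
  have hR : ∀ a b : V, G.Reachable a b := fun a b => hG.isConnected.preconnected a b
  have h1 : wdist G w v u + wdist G w u ℓ ≤ wdist G w v ℓ :=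
    wdist_split_ge hw0 (fun Wk => mem_walk_child hG hu hℓ Wk) (hR v ℓ)
  have h2 : wdist G w r v + wdist G w v u ≤ wdist G w r u :=
    wdist_split_ge hw0 (fun Wk => inSubtree_mem_walk hu.2 Wk) (hR r u)
  have h3 : 0 ≤ wdist G w v u := wdist_nonneg hw0 v u (hR v u)
  linarith

variable [Fintype V]

lemma k_pos {r : V} (k : V → ℕ) (f' : V → V) (hk_leaf : ∀ v, IsTLeaf G r v → k v = 1)
    (hk_node : ∀ v, ¬ IsTLeaf G r v →
        k v = max 1 (∑ u ∈ childrenFinset G r v,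
          if k u = 1 ∧ wdist G w v (f' u) ≤ wdist G w r v + q then k u - 1 else k u))
    (v : V) : 1 ≤ k v := by
  by_cases h : IsTLeaf G r v
  · rw [hk_leaf v h]
  · rw [hk_node v h]; exact le_max_left _ _

open scoped Classical in
lemma marked (hG : G.IsTree) {r : V} (hw0 : ∀ e ∈ G.edgeSet, 0 ≤ w e)
    (f : V → V)
    (hf : ∀ u : V, u ≠ r →
        IsTLeaf G r (f u) ∧ InSubtree G r u (f u) ∧
        ∀ x, IsTLeaf G r x → InSubtree G r u x → wdist G w u x ≤ wdist G w u (f u))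
    (k : V → ℕ)
    (hk_leaf : ∀ v, IsTLeaf G r v → k v = 1)
    (hk_node : ∀ v, ¬ IsTLeaf G r v →
        k v = max 1 (∑ u ∈ childrenFinset G r v,
          if k u = 1 ∧ wdist G w v (f u) ≤ wdist G w r v + q then k u - 1 else k u)) :
    ∀ (n : ℕ) (v : V), (Finset.univ.filter (fun x => InSubtree G r v x)).card ≤ n →
    ∃ M : Finset V,
      (∀ ℓ ∈ M, IsTLeaf G r ℓ ∧ InSubtree G r v ℓ) ∧
      (∀ ℓ ∈ M, wdist G w r v + q < wdist G w v ℓ) ∧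
      (∀ ℓ ∈ M, ∀ ℓ' ∈ M, ℓ ≠ ℓ' → ∃ c, InSubtree G r c ℓ ∧ InSubtree G r c ℓ' ∧
          (∀ p : G.Path ℓ ℓ', c ∈ p.1.support) ∧
          wdist G w r c + q < wdist G w c ℓ ∧ wdist G w r c + q < wdist G w c ℓ') ∧
      (2 ≤ k v → k v ≤ M.card) := by
  intro n
  induction n with
  | zero =>
    intro v hcard
    exfalso
    have : v ∈ Finset.univ.filter (fun x => InSubtree G r v x) :=
      Finset.mem_filter.mpr ⟨Finset.mem_univ v, inSubtree_refl r v⟩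
    have := Finset.card_pos.mpr ⟨v, this⟩
    omega
  | succ n IH =>
    intro v hcard
    by_cases hleaf : IsTLeaf G r v
    · refine ⟨∅, by simp, by simp, by simp, ?_⟩
      rw [hk_leaf v hleaf]
      omega
    · -- interior vertex (or root)
      have hchild_mem : ∀ u, u ∈ childrenFinset G r v ↔ IsTChild G r v u := by
        intro u
        simp [childrenFinset]
      -- the subtree of each child is strictly smaller
      have hsmaller : ∀ u, IsTChild G r v u →
          (Finset.univ.filter (fun x => InSubtree G r u x)).card ≤ n := by
        intro u hu
        have hsub : Finset.univ.filter (fun x => InSubtree G r u x) ⊆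
            Finset.univ.filter (fun x => InSubtree G r v x) := by
          intro x hx
          rw [Finset.mem_filter] at hx ⊢
          exact ⟨hx.1, inSubtree_trans hu.2 hx.2⟩
        have hvnot : v ∉ Finset.univ.filter (fun x => InSubtree G r u x) := by
          rw [Finset.mem_filter]
          rintro ⟨-, hv⟩
          exact G.loopless.irrefl v (inSubtree_antisymm hG hv hu.2 ▸ hu.1)
        have hvmem : v ∈ Finset.univ.filter (fun x => InSubtree G r v x) :=
          Finset.mem_filter.mpr ⟨Finset.mem_univ v, inSubtree_refl r v⟩
        have hlt := Finset.card_lt_card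
          ((Finset.ssubset_iff_of_subset hsub).mpr ⟨v, hvmem, hvnot⟩)
        omega
      have IH' : ∀ u, IsTChild G r v u → ∃ M : Finset V,
          (∀ ℓ ∈ M, IsTLeaf G r ℓ ∧ InSubtree G r u ℓ) ∧
          (∀ ℓ ∈ M, wdist G w r u + q < wdist G w u ℓ) ∧
          (∀ ℓ ∈ M, ∀ ℓ' ∈ M, ℓ ≠ ℓ' → ∃ c, InSubtree G r c ℓ ∧ InSubtree G r c ℓ' ∧
              (∀ p : G.Path ℓ ℓ', c ∈ p.1.support) ∧
              wdist G w r c + q < wdist G w c ℓ ∧ wdist G w r c + q < wdist G w c ℓ') ∧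
          (2 ≤ k u → k u ≤ M.card) := fun u hu => IH u (hsmaller u hu)
      choose! MU hMU1 hMU2 hMU3 hMU4 using IH'
      -- the contribution of each child
      set contrib : V → Finset V := fun u =>
        if k u = 1 then
          (if wdist G w v (f u) ≤ wdist G w r v + q then (∅ : Finset V) else {f u})
        else MU u with hcontrib
      -- contributions lie in the respective subtrees and consist of leaves
      have hcsub : ∀ u, IsTChild G r v u → ∀ ℓ ∈ contrib u,
          IsTLeaf G r ℓ ∧ InSubtree G r u ℓ := by
        intro u hu ℓ hℓ
        rw [hcontrib] at hℓ
        simp only at hℓ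
        split_ifs at hℓ with h1 h2
        · simp at hℓ
        · rw [Finset.mem_singleton] at hℓ
          subst hℓ
          obtain ⟨hfl, hfs, -⟩ := hf u (child_ne_root hu)
          exact ⟨hfl, hfs⟩
        · exact hMU1 u hu ℓ hℓ
      -- far property at v
      have hcfar : ∀ u, IsTChild G r v u → ∀ ℓ ∈ contrib u,
          wdist G w r v + q < wdist G w v ℓ := by
        intro u hu ℓ hℓ
        rw [hcontrib] at hℓ
        simp only at hℓ
        split_ifs at hℓ with h1 h2
        · simp at hℓ
        · rw [Finset.mem_singleton] at hℓ
          subst hℓ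
          exact lt_of_not_ge h2
        · exact far_propagate hG hw0 hu (hMU1 u hu ℓ hℓ).2 (hMU2 u hu ℓ hℓ)
      -- cardinality of contributions
      have hccard : ∀ u, IsTChild G r v u →
          (if k u = 1 ∧ wdist G w v (f u) ≤ wdist G w r v + q then k u - 1 else k u)
            ≤ (contrib u).card := by
        intro u hu
        rw [hcontrib]
        simp only
        by_cases h1 : k u = 1
        · by_cases h2 : wdist G w v (f u) ≤ wdist G w r v + q
          · rw [if_pos ⟨h1, h2⟩, if_pos h1, if_pos h2]
            simp [h1]
          · rw [if_neg (by tauto), if_pos h1, if_neg h2]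
            simp [h1]
        · rw [if_neg (by tauto), if_neg h1]
          have hk1 := k_pos (w := w) (q := q) k f hk_leaf hk_node u
          have : 2 ≤ k u := by omega
          exact hMU4 u hu this
      -- disjointness
      have hdisj : ∀ u ∈ childrenFinset G r v, ∀ u' ∈ childrenFinset G r v, u ≠ u' →
          Disjoint (contrib u) (contrib u') := by
        intro u hu u' hu' hne
        rw [hchild_mem] at hu hu'
        rw [Finset.disjoint_left]
        intro ℓ hℓ hℓ'
        exact hne (subtree_child_unique hG hu hu' (hcsub u hu ℓ hℓ).2 (hcsub u' hu' ℓ hℓ').2)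
      refine ⟨(childrenFinset G r v).biUnion contrib, ?_, ?_, ?_, ?_⟩
      · intro ℓ hℓ
        rw [Finset.mem_biUnion] at hℓ
        obtain ⟨u, hu, hℓ⟩ := hℓ
        rw [hchild_mem] at hu
        obtain ⟨h1, h2⟩ := hcsub u hu ℓ hℓ
        exact ⟨h1, inSubtree_trans hu.2 h2⟩
      · intro ℓ hℓ
        rw [Finset.mem_biUnion] at hℓ
        obtain ⟨u, hu, hℓ⟩ := hℓ
        rw [hchild_mem] at hu
        exact hcfar u hu ℓ hℓ
      · intro ℓ hℓ ℓ' hℓ' hne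
        rw [Finset.mem_biUnion] at hℓ hℓ'
        obtain ⟨u, hu, hℓ⟩ := hℓ
        obtain ⟨u', hu', hℓ'⟩ := hℓ'
        rw [hchild_mem] at hu hu'
        by_cases huu : u = u'
        · subst huu
          -- same child: must be in the recursive part
          rw [hcontrib] at hℓ hℓ'
          simp only at hℓ hℓ'
          split_ifs at hℓ hℓ' with h1 h2
          · simp at hℓ
          · rw [Finset.mem_singleton] at hℓ hℓ'
            exact absurd (hℓ.trans hℓ'.symm) hne
          · exact hMU3 u hu ℓ hℓ ℓ' hℓ' hne
        · refine ⟨v, ?_, ?_, ?_, ?_, ?_⟩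
          · exact inSubtree_trans hu.2 (hcsub u hu ℓ hℓ).2
          · exact inSubtree_trans hu'.2 (hcsub u' hu' ℓ' hℓ').2
          · exact between_of_children hG hu hu' huu (hcsub u hu ℓ hℓ).2
              (hcsub u' hu' ℓ' hℓ').2
          · exact hcfar u hu ℓ hℓ
          · exact hcfar u' hu' ℓ' hℓ'
      · intro hk2
        rw [hk_node v hleaf] at hk2 ⊢
        have hsum : (∑ u ∈ childrenFinset G r v,
            if k u = 1 ∧ wdist G w v (f u) ≤ wdist G w r v + q then k u - 1 else k u)
            ≤ ((childrenFinset G r v).biUnion contrib).card := by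
          rw [Finset.card_biUnion hdisj]
          apply Finset.sum_le_sum
          intro u hu
          exact hccard u ((hchild_mem u).mp hu)
        omega

end Part6

namespace Part7
open Expl Part3b Part4 Part5 Part6

variable {V : Type*} {G : SimpleGraph V} {w : Sym2 V → ℝ} {q : ℝ}

lemma two_far_impossible (hG : G.IsTree) {r : V} (hw0 : ∀ e ∈ G.edgeSet, 0 ≤ w e)
    (hq : 0 ≤ q) (S : ExplStrategy G r) (hopt : IsOptimal w q S) {i : Fin S.k} {ℓ ℓ' c : V}
    (hℓ : ℓ ∈ (S.walks i).support) (hℓ' : ℓ' ∈ (S.walks i).support)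
    (hc1 : InSubtree G r c ℓ) (hc2 : InSubtree G r c ℓ')
    (hbetween : ∀ p : G.Path ℓ ℓ', c ∈ p.1.support)
    (hfar1 : wdist G w r c + q < wdist G w c ℓ)
    (hfar2 : wdist G w r c + q < wdist G w c ℓ') : False := by
  classical
  have hbetween' : ∀ p : G.Path ℓ' ℓ, c ∈ p.1.support := by
    intro p
    have := hbetween ⟨p.1.reverse, p.2.reverse⟩
    rwa [SimpleGraph.Walk.support_reverse, List.mem_reverse] at this
  set W := S.walks i with hW
  set A := W.takeUntil ℓ hℓ with hA
  set Bw := W.dropUntil ℓ hℓ with hBw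
  have hWspec : A.append Bw = W := W.take_spec hℓ
  have hsplit : ℓ' ∈ A.support ∨ ℓ' ∈ Bw.support := by
    have h := hℓ'
    rw [← hWspec, SimpleGraph.Walk.mem_support_append_iff] at h
    exact h
  rcases hsplit with hcase | hcase
  · -- ℓ' is visited before ℓ; the closed detour at c contains ℓ'
    set A₁ := A.takeUntil ℓ' hcase with hA₁
    set A₂ := A.dropUntil ℓ' hcase with hA₂
    have hAspec : A₁.append A₂ = A := A.take_spec hcase
    have hcA₁ : c ∈ A₁.support := inSubtree_mem_walk hc2 A₁
    have hcA₂ : c ∈ A₂.support := mem_walk_of_forall_path hbetween' A₂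
    set P₁ := A₁.takeUntil c hcA₁ with hP₁
    set E₁ := A₁.dropUntil c hcA₁ with hE₁
    set E₂ := A₂.takeUntil c hcA₂ with hE₂
    set P₂a := A₂.dropUntil c hcA₂ with hP₂a
    have hdecomp : S.walks i = P₁.append ((E₁.append E₂).append (P₂a.append Bw)) := by
      conv_lhs => rw [← hW, ← hWspec, ← hAspec,
        ← A₁.take_spec hcA₁, ← A₂.take_spec hcA₂]
      simp only [SimpleGraph.Walk.append_assoc]
      rfl
    have hmem : ℓ' ∈ (E₁.append E₂).support := by
      rw [SimpleGraph.Walk.mem_support_append_iff]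
      exact Or.inl E₁.end_mem_support
    have := no_far_detour hG hw0 hq S hopt P₁ (E₁.append E₂) (P₂a.append Bw) hdecomp hmem
    linarith
  · -- ℓ' is visited after ℓ; the closed detour at c contains ℓ
    set B₁ := Bw.takeUntil ℓ' hcase with hB₁
    set B₂ := Bw.dropUntil ℓ' hcase with hB₂
    have hBspec : B₁.append B₂ = Bw := Bw.take_spec hcase
    have hcA : c ∈ A.support := inSubtree_mem_walk hc1 A
    have hcB₁ : c ∈ B₁.support := mem_walk_of_forall_path hbetween B₁
    set P₁ := A.takeUntil c hcA with hP₁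
    set E₁ := A.dropUntil c hcA with hE₁
    set E₂ := B₁.takeUntil c hcB₁ with hE₂
    set P₂a := B₁.dropUntil c hcB₁ with hP₂a
    have hdecomp : S.walks i = P₁.append ((E₁.append E₂).append (P₂a.append B₂)) := by
      conv_lhs => rw [← hW, ← hWspec, ← hBspec,
        ← A.take_spec hcA, ← B₁.take_spec hcB₁]
      simp only [SimpleGraph.Walk.append_assoc]
      rfl
    have hmem : ℓ ∈ (E₁.append E₂).support := by
      rw [SimpleGraph.Walk.mem_support_append_iff]
      exact Or.inl E₁.end_mem_support
    have := no_far_detour hG hw0 hq S hopt P₁ (E₁.append E₂) (P₂a.append B₂) hdecomp hmem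
    linarith

end Part7


open scoped Classical in
/-- Lemma 2 of the paper: given the recursively defined labeling `k` (with `k v = 1`
for leaves, and `k v = max 1 (Σ_{u child of v} κ(u))` for non-leaves, where
`κ(u) = k u - 1` when `k u = 1` and the furthest leaf `f u` of `T_u` satisfies
`d(v, f u) ≤ d(r, v) + q`, and `κ(u) = k u` otherwise), every cost-optimal
exploration strategy uses at least `k v` walks that enter the subtree `T_v`. -/
theorem labeling_lower_bound {V : Type*} [Fintype V]
    (G : SimpleGraph V) (hG : G.IsTree) (hcard : 1 < Fintype.card V)
    (r : V) (w : Sym2 V → ℝ) (hw : ∀ e ∈ G.edgeSet, 0 < w e)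
    (q : ℝ) (hq : 0 ≤ q)
    (hcompressed : ∀ v : V, v ≠ r → ¬ IsTLeaf G r v → 2 ≤ (childrenFinset G r v).card)
    (f : V → V)
    (hf : ∀ u : V, u ≠ r →
        IsTLeaf G r (f u) ∧ InSubtree G r u (f u) ∧
        ∀ x, IsTLeaf G r x → InSubtree G r u x → wdist G w u x ≤ wdist G w u (f u))
    (k : V → ℕ)
    (hk_leaf : ∀ v, IsTLeaf G r v → k v = 1)
    (hk_node : ∀ v, ¬ IsTLeaf G r v →
        k v = max 1 (∑ u ∈ childrenFinset G r v,
          if k u = 1 ∧ wdist G w v (f u) ≤ wdist G w r v + q then k u - 1 else k u)) :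
    ∀ (v : V) (S : ExplStrategy G r), IsOptimal w q S →
      k v ≤ Nat.card {a : Fin S.k // ∃ u ∈ (S.walks a).support, InSubtree G r v u} := by
  classical
  intro v S hopt
  have hw0 : ∀ e ∈ G.edgeSet, 0 ≤ w e := fun e he => (hw e he).le
  have hone : 1 ≤ Nat.card {a : Fin S.k // ∃ u ∈ (S.walks a).support, InSubtree G r v u} := by
    obtain ⟨i, hi⟩ := S.covers v
    have hne : Nonempty {a : Fin S.k // ∃ u ∈ (S.walks a).support, InSubtree G r v u} :=
      ⟨⟨i, v, hi, Expl.inSubtree_refl r v⟩⟩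
    have hfin : Finite {a : Fin S.k // ∃ u ∈ (S.walks a).support, InSubtree G r v u} :=
      inferInstance
    exact Nat.one_le_iff_ne_zero.mpr (Nat.card_ne_zero.mpr ⟨hne, hfin⟩)
  by_cases hk2 : 2 ≤ k v
  · obtain ⟨M, hM1, hM2, hM3, hM4⟩ := Part6.marked hG hw0 f hf k hk_leaf hk_node
      ((Finset.univ.filter (fun x => InSubtree G r v x)).card) v le_rfl
    have hkM := hM4 hk2
    choose φ hφ using fun ℓ => S.covers ℓ
    have hinj : Set.InjOn φ M := by
      intro ℓ h1 ℓ' h2 heq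
      by_contra hne
      obtain ⟨c, hc1, hc2, hbet, hf1, hf2⟩ := hM3 ℓ h1 ℓ' h2 hne
      exact Part7.two_far_impossible hG hw0 hq S hopt (i := φ ℓ) (hφ ℓ)
        (by rw [heq]; exact hφ ℓ') hc1 hc2 hbet hf1 hf2
    have hcard2 : M.card ≤
        Nat.card {a : Fin S.k // ∃ u ∈ (S.walks a).support, InSubtree G r v u} := by
      rw [Nat.card_eq_fintype_card, Fintype.card_subtype]
      apply Finset.card_le_card_of_injOn φ
      · intro ℓ hℓ
        rw [Finset.mem_coe, Finset.mem_filter]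
        exact ⟨Finset.mem_univ _, ⟨ℓ, hφ ℓ, (hM1 ℓ hℓ).2⟩⟩
      · exact hinj
    omega
  · omega
end
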